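/- arXiv:2006.11428 — 7 statements merged into one kernel-verified Lean document; each statement's English description precedes it below -/
import Mathlib

section
/- Let X be a Fréchet space and T : X → X a continuous linear operator. The following assertions are equivalent: (a) T is reiteratively hypercyclic; (b) T is hypercyclic and the set RRec(T) of reiteratively recurrent vectors is residual; (c) T is hypercyclic and RRec(T) is of second category; (d) T is hypercyclic and reiteratively recurrent; (e) T is hypercyclic and every hypercyclic vector for T is reiteratively hypercyclic; (f) T admits a vector that is both hypercyclic and reiteratively recurrent. In that case the set of vectors that are both hypercyclic and reiteratively recurrent is residual. -/
open Filter Topology Set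

noncomputable def lowerDensity (A : Set ℕ) : ℝ :=
  Filter.atTop.liminf fun N : ℕ => ((A ∩ Set.Iic N).ncard : ℝ) / (N + 1)

noncomputable def upperDensity (A : Set ℕ) : ℝ :=
  Filter.atTop.limsup fun N : ℕ => ((A ∩ Set.Iic N).ncard : ℝ) / (N + 1)

noncomputable def upperBanachDensity (A : Set ℕ) : ℝ :=
  Filter.atTop.limsup fun N : ℕ =>
    ⨆ m : ℕ, (((A ∩ Set.Icc m (m + N)).ncard : ℝ) / (N + 1))

/-- A set of naturals is syndetic if it has bounded gaps. -/
def Syndetic (A : Set ℕ) : Prop :=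
  ∃ m : ℕ, ∀ n : ℕ, ∃ k ∈ A, n ≤ k ∧ k < n + m

/-- A set of naturals is an IP-set if it contains all finite sums of distinct terms of some
strictly increasing sequence of positive integers. -/
def IsIPSet (A : Set ℕ) : Prop :=
  ∃ k : ℕ → ℕ, StrictMono k ∧ (∀ i, 0 < k i) ∧
    ∀ s : Finset ℕ, s.Nonempty → (∑ j ∈ s, k j) ∈ A

/-- A set of naturals is an IP*-set if it meets every IP-set. -/
def IsIPStarSet (A : Set ℕ) : Prop :=
  ∀ B : Set ℕ, IsIPSet B → (A ∩ B).Nonempty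

/-- The return set N(x,U) = {n : T^n x ∈ U}. -/
def returnSet {X : Type*} (T : X → X) (x : X) (U : Set X) : Set ℕ :=
  {n : ℕ | T^[n] x ∈ U}

def IsRecurrentVec {X : Type*} [TopologicalSpace X] (T : X → X) (x : X) : Prop :=
  ∀ U ∈ nhds x, (returnSet T x U).Infinite

def IsUniformlyRecurrentVec {X : Type*} [TopologicalSpace X] (T : X → X) (x : X) : Prop :=
  ∀ U ∈ nhds x, Syndetic (returnSet T x U)

def IsFrequentlyRecurrentVec {X : Type*} [TopologicalSpace X] (T : X → X) (x : X) : Prop :=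
  ∀ U ∈ nhds x, 0 < lowerDensity (returnSet T x U)

def IsUpperFrequentlyRecurrentVec {X : Type*} [TopologicalSpace X] (T : X → X) (x : X) : Prop :=
  ∀ U ∈ nhds x, 0 < upperDensity (returnSet T x U)

def IsReiterativelyRecurrentVec {X : Type*} [TopologicalSpace X] (T : X → X) (x : X) : Prop :=
  ∀ U ∈ nhds x, 0 < upperBanachDensity (returnSet T x U)

def IsIPStarRecurrentVec {X : Type*} [TopologicalSpace X] (T : X → X) (x : X) : Prop :=
  ∀ U ∈ nhds x, IsIPStarSet (returnSet T x U)

def IsHypercyclicVec {X : Type*} [TopologicalSpace X] (T : X → X) (x : X) : Prop :=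
  Dense (Set.range fun n : ℕ => T^[n] x)

def IsFrequentlyHypercyclicVec {X : Type*} [TopologicalSpace X] (T : X → X) (x : X) : Prop :=
  ∀ U : Set X, IsOpen U → U.Nonempty → 0 < lowerDensity (returnSet T x U)

def IsUpperFrequentlyHypercyclicVec {X : Type*} [TopologicalSpace X] (T : X → X) (x : X) : Prop :=
  ∀ U : Set X, IsOpen U → U.Nonempty → 0 < upperDensity (returnSet T x U)

def IsReiterativelyHypercyclicVec {X : Type*} [TopologicalSpace X] (T : X → X) (x : X) : Prop :=
  ∀ U : Set X, IsOpen U → U.Nonempty → 0 < upperBanachDensity (returnSet T x U)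

/-- Power boundedness: the iterates form an equicontinuous family (at zero). -/
def PowerBounded {X : Type*} [Zero X] [TopologicalSpace X] (T : X → X) : Prop :=
  ∀ W₁ ∈ nhds (0 : X), ∃ W₂ ∈ nhds (0 : X), ∀ n : ℕ, ∀ x ∈ W₂, T^[n] x ∈ W₁

/-- The cut-shift-and-paste property for a family of subsets of ℕ. -/
def CuSP (F : Set ℕ → Prop) : Prop :=
  ∀ q : ℕ, 0 < q → ∀ I : Fin q → Set ℕ, (⋃ j, I j) = Set.univ →
    ∀ shift : Fin q → ℕ, ∀ A : Set ℕ, F A →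
      F (⋃ j, (fun k => shift j + k) '' (A ∩ I j))


section UBDaux

lemma icc_ncard (m N : ℕ) : (Set.Icc m (m + N)).ncard = N + 1 := by
  simp only [← Finset.coe_Icc, Set.ncard_coe_finset, Nat.card_Icc]
  omega

lemma window_nonneg (A : Set ℕ) (m N : ℕ) :
    0 ≤ ((A ∩ Set.Icc m (m + N)).ncard : ℝ) / (N + 1) := by positivity

lemma window_le_one (A : Set ℕ) (m N : ℕ) :
    ((A ∩ Set.Icc m (m + N)).ncard : ℝ) / (N + 1) ≤ 1 := by
  rw [div_le_one (by positivity)]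
  have : (A ∩ Set.Icc m (m + N)).ncard ≤ N + 1 := by
    rw [← icc_ncard m N]
    exact Set.ncard_le_ncard inter_subset_right (Set.finite_Icc _ _)
  exact_mod_cast this

lemma bddAbove_window (A : Set ℕ) (N : ℕ) :
    BddAbove (Set.range fun m => ((A ∩ Set.Icc m (m + N)).ncard : ℝ) / (N + 1)) := by
  refine ⟨1, ?_⟩
  rintro y ⟨m, rfl⟩
  exact window_le_one A m N

lemma bounded_f (A : Set ℕ) :
    IsBoundedUnder (· ≤ ·) atTop (fun N : ℕ =>
      ⨆ m : ℕ, (((A ∩ Set.Icc m (m + N)).ncard : ℝ) / (N + 1))) :=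
  isBoundedUnder_of ⟨1, fun N => ciSup_le fun m => window_le_one A m N⟩

lemma cobounded_f (A : Set ℕ) :
    IsCoboundedUnder (· ≤ ·) atTop (fun N : ℕ =>
      ⨆ m : ℕ, (((A ∩ Set.Icc m (m + N)).ncard : ℝ) / (N + 1))) :=
  IsBoundedUnder.isCoboundedUnder_le <| isBoundedUnder_of
    ⟨0, fun N => (ge_iff_le).2 <|
      le_trans (window_nonneg A 0 N) (le_ciSup (bddAbove_window A N) 0)⟩

lemma uBD_mono {A B : Set ℕ} (h : A ⊆ B) :
    upperBanachDensity A ≤ upperBanachDensity B := by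
  refine limsup_le_limsup (Filter.Eventually.of_forall fun N => ?_) (cobounded_f A) (bounded_f B)
  refine ciSup_le fun m => le_trans ?_ (le_ciSup (bddAbove_window B N) m)
  have hc : (A ∩ Set.Icc m (m + N)).ncard ≤ (B ∩ Set.Icc m (m + N)).ncard :=
    Set.ncard_le_ncard (Set.inter_subset_inter_left _ h) ((Set.finite_Icc _ _).inter_of_right _)
  have hc' : ((A ∩ Set.Icc m (m + N)).ncard : ℝ) ≤ ((B ∩ Set.Icc m (m + N)).ncard : ℝ) := by
    exact_mod_cast hc
  gcongr

lemma uBD_empty : upperBanachDensity (∅ : Set ℕ) = 0 := by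
  have : ∀ N : ℕ, (⨆ m : ℕ, (((∅ ∩ Set.Icc m (m + N)).ncard : ℝ) / (N + 1))) = 0 := by
    intro N
    simp
  unfold upperBanachDensity
  simp only [this]
  exact limsup_const 0

lemma uBD_pos_nonempty {A : Set ℕ} (h : 0 < upperBanachDensity A) : A.Nonempty := by
  rcases A.eq_empty_or_nonempty with rfl | hne
  · rw [uBD_empty] at h; exact absurd h (lt_irrefl (0:ℝ))
  · exact hne

/-- insertion: frequently good windows gives lower bound for uBD -/
lemma le_uBD_of_frequently {A : Set ℕ} {c : ℝ}
    (h : ∃ᶠ N in atTop, ∃ m, c * (N + 1) ≤ ((A ∩ Set.Icc m (m + N)).ncard : ℝ)) :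
    c ≤ upperBanachDensity A := by
  refine le_limsup_of_frequently_le ?_ (bounded_f A)
  refine h.mono fun N ⟨m, hm⟩ => ?_
  refine le_trans ?_ (le_ciSup (bddAbove_window A N) m)
  rw [le_div_iff₀ (by positivity)]
  exact hm

/-- extraction: positive uBD gives frequently good windows -/
lemma frequently_of_uBD_pos {A : Set ℕ} (h : 0 < upperBanachDensity A) :
    ∃ c : ℝ, 0 < c ∧
      ∃ᶠ N in atTop, ∃ m, c * (N + 1) ≤ ((A ∩ Set.Icc m (m + N)).ncard : ℝ) := by
  refine ⟨upperBanachDensity A / 2, by linarith, ?_⟩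
  have h2 : upperBanachDensity A / 2 < upperBanachDensity A := by linarith
  have := frequently_lt_of_lt_limsup (cobounded_f A) h2
  refine this.mono fun N hN => ?_
  rw [show (⨆ m : ℕ, (((A ∩ Set.Icc m (m + N)).ncard : ℝ) / (N + 1)))
    = iSup (fun m : ℕ => (((A ∩ Set.Icc m (m + N)).ncard : ℝ) / (N + 1))) from rfl] at hN
  rw [lt_ciSup_iff (bddAbove_window A N)] at hN
  obtain ⟨m, hm⟩ := hN
  rw [lt_div_iff₀ (by positivity)] at hm
  exact ⟨m, by linarith⟩

section Dyn
variable {X : Type*} [TopologicalSpace X] {T : X → X}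

omit [TopologicalSpace X] in
lemma returnSet_iterate (x : X) (n : ℕ) (U : Set X) :
    returnSet T (T^[n] x) U = returnSet T x (T^[n] ⁻¹' U) := by
  ext k
  simp only [returnSet, Set.mem_setOf_eq, Set.mem_preimage]
  rw [← Function.iterate_add_apply, ← Function.iterate_add_apply, add_comm]

lemma rrec_iterate (hT : Continuous T) {x : X} (hx : IsReiterativelyRecurrentVec T x) (n : ℕ) :
    IsReiterativelyRecurrentVec T (T^[n] x) := by
  intro U hU
  rw [returnSet_iterate]
  exact hx _ ((hT.iterate n).continuousAt.preimage_mem_nhds hU)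

lemma rh_hc {x : X} (hx : IsReiterativelyHypercyclicVec T x) : IsHypercyclicVec T x := by
  rw [IsHypercyclicVec, dense_iff_inter_open]
  intro U hU hUne
  obtain ⟨n, hn⟩ := uBD_pos_nonempty (hx U hU hUne)
  exact ⟨T^[n] x, hn, ⟨n, rfl⟩⟩

lemma rh_rrec {x : X} (hx : IsReiterativelyHypercyclicVec T x) :
    IsReiterativelyRecurrentVec T x := by
  intro U hU
  obtain ⟨V, hVU, hV, hxV⟩ := mem_nhds_iff.1 hU
  calc (0:ℝ) < upperBanachDensity (returnSet T x V) := hx V hV ⟨x, hxV⟩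
    _ ≤ _ := uBD_mono (fun n hn => hVU hn)

lemma key_window (hT : Continuous T) (hdense : Dense {y : X | IsReiterativelyRecurrentVec T y})
    {x : X} (hx : IsHypercyclicVec T x) : IsReiterativelyHypercyclicVec T x := by
  intro U hU hUne
  obtain ⟨y, hy, hyU⟩ := hdense.exists_mem_open hU hUne
  obtain ⟨c, hc, hfreq⟩ := frequently_of_uBD_pos (hy U (hU.mem_nhds hyU))
  have hfreq' : ∃ᶠ N in atTop, ∃ m',
      c * (N+1) ≤ ((returnSet T x U ∩ Set.Icc m' (m'+N)).ncard : ℝ) := by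
    refine hfreq.mono fun N hN => ?_
    obtain ⟨m, hm⟩ := hN
    set F : Set ℕ := returnSet T y U ∩ Set.Icc m (m+N) with hF
    have hFfin : F.Finite := (Set.finite_Icc _ _).inter_of_right _
    have hWopen : IsOpen (⋂ j ∈ F, T^[j] ⁻¹' U) :=
      hFfin.isOpen_biInter fun j _ => hU.preimage (hT.iterate j)
    have hyW : y ∈ ⋂ j ∈ F, T^[j] ⁻¹' U :=
      Set.mem_iInter₂.2 fun j hj => hj.1
    obtain ⟨z, hz, hzW⟩ := hx.exists_mem_open hWopen ⟨y, hyW⟩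
    obtain ⟨n, rfl⟩ := hz
    refine ⟨n + m, ?_⟩
    have himg : (fun j => n + j) '' F ⊆ returnSet T x U ∩ Set.Icc (n+m) (n+m+N) := by
      rintro _ ⟨j, hj, rfl⟩
      refine ⟨?_, ?_⟩
      · show T^[n+j] x ∈ U
        rw [add_comm, Function.iterate_add_apply]
        exact Set.mem_iInter₂.1 hzW j hj
      · obtain ⟨-, hj2⟩ := hj
        show n + j ∈ Set.Icc (n+m) (n+m+N)
        rw [Set.mem_Icc] at hj2 ⊢
        omega
    calc c * (N+1) ≤ (F.ncard : ℝ) := hm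
      _ = (((fun j => n + j) '' F).ncard : ℝ) := by
          rw [Set.ncard_image_of_injective _ (add_right_injective n)]
      _ ≤ _ := by
          exact_mod_cast Set.ncard_le_ncard himg ((Set.finite_Icc _ _).inter_of_right _)
  have := le_uBD_of_frequently hfreq'
  linarith

lemma tail_dense [T1Space X] [∀ x : X, NeBot (𝓝[≠] x)] {x : X}
    (hx : IsHypercyclicVec T x) (m : ℕ) :
    Dense (Set.range fun n : ℕ => T^[n + m] x) := by
  have hsub : Set.range (fun n : ℕ => T^[n] x) \ ((fun k : ℕ => T^[k] x) '' (Set.Iio m))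
      ⊆ Set.range fun n : ℕ => T^[n + m] x := by
    rintro z ⟨⟨n, rfl⟩, hz2⟩
    rcases le_or_gt m n with h | h
    · refine ⟨n - m, ?_⟩
      show T^[n - m + m] x = T^[n] x
      rw [Nat.sub_add_cancel h]
    · exact absurd ⟨n, h, rfl⟩ hz2
  exact (hx.diff_finite ((Set.finite_Iio m).image _)).mono hsub

lemma birkhoff [T1Space X] [∀ x : X, NeBot (𝓝[≠] x)]
    [SecondCountableTopology X]
    (hT : Continuous T) {x₀ : X} (hx₀ : IsHypercyclicVec T x₀) :
    {x : X | IsHypercyclicVec T x} ∈ residual X := by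
  rw [mem_residual_iff]
  refine ⟨(fun U => ⋃ n : ℕ, T^[n] ⁻¹' U) ''
      {U ∈ TopologicalSpace.countableBasis X | U.Nonempty}, ?_, ?_, ?_, ?_⟩
  · rintro t ⟨U, hU, rfl⟩
    exact isOpen_iUnion fun n =>
      ((TopologicalSpace.isBasis_countableBasis X).isOpen hU.1).preimage (hT.iterate n)
  · rintro t ⟨U, hU, rfl⟩
    have horb : Set.range (fun n : ℕ => T^[n] x₀) ⊆ ⋃ n : ℕ, T^[n] ⁻¹' U := by
      rintro _ ⟨m, rfl⟩
      obtain ⟨z, hz, hzU⟩ := (tail_dense hx₀ m).exists_mem_open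
        ((TopologicalSpace.isBasis_countableBasis X).isOpen hU.1) hU.2
      obtain ⟨n, rfl⟩ := hz
      refine Set.mem_iUnion.2 ⟨n, ?_⟩
      show T^[n] (T^[m] x₀) ∈ U
      rw [← Function.iterate_add_apply]
      exact hzU
    exact Dense.mono horb hx₀
  · exact ((TopologicalSpace.countable_countableBasis X).mono (sep_subset _ _)).image _
  · intro x hx
    rw [Set.mem_setOf_eq, IsHypercyclicVec,
      (TopologicalSpace.isBasis_countableBasis X).dense_iff]
    intro U hU hUne
    have hxG := Set.mem_sInter.1 hx _ (Set.mem_image_of_mem _ ⟨hU, hUne⟩)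
    obtain ⟨n, hn⟩ := Set.mem_iUnion.1 hxG
    exact ⟨T^[n] x, hn, n, rfl⟩

end Dyn
end UBDaux

theorem stmt0 {𝕜 : Type*} [RCLike 𝕜] {X : Type*} [AddCommGroup X] [Module 𝕜 X]
    [UniformSpace X] [IsUniformAddGroup X] [ContinuousSMul 𝕜 X] [CompleteSpace X]
    [TopologicalSpace.MetrizableSpace X] [Module ℝ X] [IsScalarTower ℝ 𝕜 X]
    [LocallyConvexSpace ℝ X] (T : X →L[𝕜] X) :
    [∃ x : X, IsReiterativelyHypercyclicVec (⇑T) x,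
     (∃ x : X, IsHypercyclicVec (⇑T) x) ∧
       {x : X | IsReiterativelyRecurrentVec (⇑T) x} ∈ residual X,
     (∃ x : X, IsHypercyclicVec (⇑T) x) ∧
       ¬ IsMeagre {x : X | IsReiterativelyRecurrentVec (⇑T) x},
     (∃ x : X, IsHypercyclicVec (⇑T) x) ∧
       Dense {x : X | IsReiterativelyRecurrentVec (⇑T) x},
     (∃ x : X, IsHypercyclicVec (⇑T) x) ∧
       (∀ x : X, IsHypercyclicVec (⇑T) x → IsReiterativelyHypercyclicVec (⇑T) x),
     ∃ x : X, IsHypercyclicVec (⇑T) x ∧ IsReiterativelyRecurrentVec (⇑T) x].TFAE ∧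
    ((∃ x : X, IsReiterativelyHypercyclicVec (⇑T) x) →
      {x : X | IsHypercyclicVec (⇑T) x ∧ IsReiterativelyRecurrentVec (⇑T) x} ∈ residual X) := by
  classical
  have hTc : Continuous (⇑T) := T.continuous
  haveI : (𝓝 (0 : X)).IsCountablyGenerated := by infer_instance
  haveI : (uniformity X).IsCountablyGenerated :=
    IsUniformAddGroup.uniformity_countably_generated
  haveI : ContinuousSMul ℝ X := by
    refine ⟨?_⟩
    have hcont : Continuous fun p : ℝ × X => ((p.1 : 𝕜) • p.2) :=
      continuous_smul.comp ((RCLike.continuous_ofReal.comp continuous_fst).prodMk continuous_snd)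
    have heq : (fun p : ℝ × X => p.1 • p.2) = fun p : ℝ × X => ((p.1 : 𝕜) • p.2) := by
      funext p
      exact RCLike.real_smul_eq_coe_smul (K := 𝕜) p.1 p.2
    rw [heq]
    exact hcont
  -- Birkhoff: the set of hypercyclic vectors is residual as soon as it is nonempty.
  have hc_residual : (∃ x : X, IsHypercyclicVec (⇑T) x) →
      {x : X | IsHypercyclicVec (⇑T) x} ∈ residual X := by
    rintro ⟨x₀, hx₀⟩
    haveI : TopologicalSpace.SeparableSpace X :=
      ⟨⟨_, Set.countable_range _, hx₀⟩⟩
    haveI : SecondCountableTopology X :=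
      UniformSpace.secondCountable_of_separable X
    rcases subsingleton_or_nontrivial X with h | h
    · have : {x : X | IsHypercyclicVec (⇑T) x} = Set.univ := by
        ext x
        simp only [Set.mem_setOf_eq, Set.mem_univ, iff_true]
        intro y
        have : y = x := Subsingleton.elim y x
        rw [this]
        exact subset_closure ⟨0, rfl⟩
      rw [this]
      exact Filter.univ_mem
    · haveI : ∀ z : X, (𝓝[≠] z).NeBot := fun z => Module.punctured_nhds_neBot ℝ X z
      exact birkhoff hTc hx₀
  -- (d) implies every hypercyclic vector is reiteratively hypercyclic
  have hkey : Dense {y : X | IsReiterativelyRecurrentVec (⇑T) y} →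
      ∀ x : X, IsHypercyclicVec (⇑T) x → IsReiterativelyHypercyclicVec (⇑T) x :=
    fun hd x hx => key_window hTc hd hx
  constructor
  · tfae_have 1 → 6 := by
      rintro ⟨x, hx⟩
      exact ⟨x, rh_hc hx, rh_rrec hx⟩
    tfae_have 6 → 4 := by
      rintro ⟨x, hx, hr⟩
      refine ⟨⟨x, hx⟩, ?_⟩
      refine Dense.mono ?_ hx
      rintro _ ⟨n, rfl⟩
      exact rrec_iterate hTc hr n
    tfae_have 4 → 5 := by
      rintro ⟨hhc, hd⟩
      exact ⟨hhc, hkey hd⟩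
    tfae_have 5 → 1 := by
      rintro ⟨⟨x, hx⟩, hall⟩
      exact ⟨x, hall x hx⟩
    tfae_have 4 → 2 := by
      rintro ⟨hhc, hd⟩
      refine ⟨hhc, Filter.mem_of_superset (hc_residual hhc) ?_⟩
      intro x hx
      exact rh_rrec (hkey hd x hx)
    tfae_have 2 → 3 := by
      rintro ⟨hhc, hres⟩
      refine ⟨hhc, fun hmeag => ?_⟩
      have h0 : (∅ : Set X) ∈ residual X := by
        have := Filter.inter_mem hres hmeag
        rwa [Set.inter_compl_self] at this
      have := dense_of_mem_residual h0
      have h00 : (0 : X) ∈ closure (∅ : Set X) := this 0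
      rw [closure_empty] at h00
      exact h00
    tfae_have 3 → 6 := by
      rintro ⟨hhc, hnm⟩
      by_contra hcon
      push_neg at hcon
      have hsub : {x : X | IsReiterativelyRecurrentVec (⇑T) x} ⊆
          {x : X | IsHypercyclicVec (⇑T) x}ᶜ := by
        intro x hx hx2
        exact hcon x hx2 hx
      have hmeag : IsMeagre ({x : X | IsHypercyclicVec (⇑T) x}ᶜ) := by
        rw [IsMeagre, compl_compl]
        exact hc_residual hhc
      exact hnm (hmeag.mono hsub)
    tfae_finish
  · rintro ⟨x, hx⟩
    have hd : Dense {y : X | IsReiterativelyRecurrentVec (⇑T) y} := by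
      refine Dense.mono ?_ (rh_hc hx)
      rintro _ ⟨n, rfl⟩
      exact rrec_iterate hTc (rh_rrec hx) n
    refine Filter.mem_of_superset (hc_residual ⟨x, rh_hc hx⟩) ?_
    intro z hz
    exact ⟨hz, rh_rrec (hkey hd z hz)⟩
end

section
/- Every chaotic operator on a Fréchet space is reiteratively hypercyclic. That is, if X is a Fréchet space and T : X → X is a continuous linear operator that is hypercyclic and has a dense set of periodic points, then T admits a vector x such that for every non-empty open set U ⊆ X the set {n ∈ ℕ : T^n x ∈ U} has positive upper Banach density. -/
open Filter Topology Set

private lemma window_term_le_one (A : Set ℕ) (N m : ℕ) :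
    ((A ∩ Set.Icc m (m + N)).ncard : ℝ) / (N + 1) ≤ 1 := by
  have hfin : (Set.Icc m (m + N)).Finite := Set.finite_Icc _ _
  have h1 : (A ∩ Set.Icc m (m + N)).ncard ≤ (Set.Icc m (m + N)).ncard :=
    Set.ncard_le_ncard Set.inter_subset_right hfin
  have h2 : (Set.Icc m (m + N)).ncard = N + 1 := by
    rw [← Nat.card_coe_set_eq, Nat.card_eq_card_toFinset, Set.toFinset_Icc, Nat.card_Icc]
    omega
  rw [div_le_one (by positivity)]
  have : (A ∩ Set.Icc m (m + N)).ncard ≤ N + 1 := by omega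
  exact_mod_cast this

private lemma window_bdd (A : Set ℕ) (N : ℕ) :
    BddAbove (Set.range fun m : ℕ => ((A ∩ Set.Icc m (m + N)).ncard : ℝ) / (N + 1)) := by
  refine ⟨1, ?_⟩
  rintro x ⟨m, rfl⟩
  exact window_term_le_one A N m

theorem stmt1 {𝕜 : Type*} [RCLike 𝕜] {X : Type*} [AddCommGroup X] [Module 𝕜 X]
    [UniformSpace X] [IsUniformAddGroup X] [ContinuousSMul 𝕜 X] [CompleteSpace X]
    [TopologicalSpace.MetrizableSpace X] [Module ℝ X] [IsScalarTower ℝ 𝕜 X]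
    [LocallyConvexSpace ℝ X] (T : X →L[𝕜] X)
    (hhc : ∃ x : X, IsHypercyclicVec (⇑T) x)
    (hper : Dense {x : X | ∃ n : ℕ, 1 ≤ n ∧ (⇑T)^[n] x = x}) :
    ∃ x : X, IsReiterativelyHypercyclicVec (⇑T) x := by
  obtain ⟨y, hy⟩ := hhc
  refine ⟨y, fun U hUopen hUne => ?_⟩
  -- pick a periodic point in U
  obtain ⟨p, ⟨d, hd1, hdp⟩, hpU⟩ := hper.exists_mem_open hUopen hUne
  have hTc : Continuous (⇑T) := T.continuous
  -- key: for each K there is n with K+1 returns spaced by d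
  have key : ∀ K : ℕ, ∃ n : ℕ, ∀ j ≤ K, (⇑T)^[n + j * d] y ∈ U := by
    intro K
    set W : Set X := ⋂ j ∈ Finset.range (K + 1), ((⇑T)^[j * d]) ⁻¹' U with hW
    have hWopen : IsOpen W := by
      refine isOpen_biInter_finset fun j _ => ?_
      exact (hUopen.preimage (hTc.iterate _))
    have hpW : p ∈ W := by
      refine Set.mem_iInter₂.mpr fun j hj => ?_
      have : (⇑T)^[j * d] p = p := by
        rw [mul_comm, Function.iterate_mul]
        clear hj
        induction j with
        | zero => rfl
        | succ k ih => rw [Function.iterate_succ_apply', ih, hdp]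
      simpa [this] using hpU
    obtain ⟨z, ⟨n, rfl⟩, hzW⟩ := hy.exists_mem_open hWopen ⟨p, hpW⟩
    refine ⟨n, fun j hj => ?_⟩
    have := Set.mem_iInter₂.mp hzW j (Finset.mem_range.mpr (by omega))
    rw [add_comm, Function.iterate_add_apply]
    exact this
  -- hence the window term at N = K*d is at least 1/d
  have hterm : ∀ K : ℕ,
      (1 : ℝ) / d ≤ ⨆ m : ℕ,
        (((returnSet (⇑T) y U ∩ Set.Icc m (m + K * d)).ncard : ℝ) / ((K * d : ℕ) + 1)) := by
    intro K
    obtain ⟨n, hn⟩ := key K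
    set A := returnSet (⇑T) y U
    have hsub : ↑((Finset.range (K + 1)).image fun j => n + j * d)
        ⊆ A ∩ Set.Icc n (n + K * d) := by
      intro x hx
      simp only [Finset.coe_image, Set.mem_image, Finset.coe_range, Set.mem_Iio] at hx
      obtain ⟨j, hj, rfl⟩ := hx
      refine ⟨hn j (by omega), ?_⟩
      constructor
      · omega
      · have : j * d ≤ K * d := Nat.mul_le_mul_right d (by omega)
        omega
    have hcard : ((Finset.range (K + 1)).image fun j => n + j * d).card = K + 1 := by
      rw [Finset.card_image_of_injective _ (fun a b hab => by
        have : a * d = b * d := by omega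
        exact Nat.eq_of_mul_eq_mul_right (by omega) this)]
      simp
    have hfin : (A ∩ Set.Icc n (n + K * d)).Finite :=
      (Set.finite_Icc _ _).subset Set.inter_subset_right
    have hge : K + 1 ≤ (A ∩ Set.Icc n (n + K * d)).ncard := by
      have := Set.ncard_le_ncard hsub hfin
      rwa [Set.ncard_coe_finset, hcard] at this
    have hstep : (1 : ℝ) / d ≤ ((A ∩ Set.Icc n (n + K * d)).ncard : ℝ) / ((K * d : ℕ) + 1) := by
      push_cast
      have hd0 : (0 : ℝ) < d := by exact_mod_cast hd1
      rw [div_le_div_iff₀ hd0 (by positivity)]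
      have h1 : ((K : ℝ) * d + 1) ≤ (K + 1) * d := by
        have : (1 : ℝ) ≤ d := by exact_mod_cast hd1
        nlinarith
      have h2 : ((K : ℝ) + 1) ≤ ((A ∩ Set.Icc n (n + K * d)).ncard : ℝ) := by
        exact_mod_cast hge
      calc (1 : ℝ) * (K * d + 1) = K * d + 1 := by ring
        _ ≤ (K + 1) * d := h1
        _ ≤ ((A ∩ Set.Icc n (n + K * d)).ncard : ℝ) * d := by nlinarith
    calc (1 : ℝ) / d ≤ ((A ∩ Set.Icc n (n + K * d)).ncard : ℝ) / ((K * d : ℕ) + 1) := hstep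
      _ ≤ _ := le_ciSup (window_bdd A (K * d)) n
  -- conclude via limsup
  have hd0 : (0 : ℝ) < 1 / d := by
    have : (0 : ℝ) < d := by exact_mod_cast hd1
    positivity
  refine lt_of_lt_of_le hd0 ?_
  apply Filter.le_limsup_of_frequently_le
  · rw [Filter.frequently_atTop]
    intro N₀
    refine ⟨N₀ * d, ?_, ?_⟩
    · calc N₀ = N₀ * 1 := by omega
        _ ≤ N₀ * d := Nat.mul_le_mul_left N₀ hd1
    · exact hterm N₀
  · refine Filter.isBoundedUnder_of ⟨1, fun N => ?_⟩
    exact Real.iSup_le (fun m => window_term_le_one _ N m) zero_le_one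
end

section
/- Let X be a Fréchet space and T : X → X a continuous linear operator. The following assertions are equivalent: (a) T is upper frequently hypercyclic; (b) T is hypercyclic and the set UFRec(T) of upper frequently recurrent vectors is residual; (c) T is hypercyclic and UFRec(T) is of second category; (d) T admits a vector that is both hypercyclic and upper frequently recurrent. In that case the set of vectors that are both hypercyclic and upper frequently recurrent is residual, and moreover every vector that is both hypercyclic and upper frequently recurrent is upper frequently hypercyclic. -/
open Filter Topology Set

namespace UFH

noncomputable def dratio (A : Set ℕ) (N : ℕ) : ℝ := ((A ∩ Set.Iic N).ncard : ℝ) / (N + 1)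

lemma upperDensity_eq (A : Set ℕ) : upperDensity A = Filter.atTop.limsup (dratio A) := rfl

lemma finite_inter (A : Set ℕ) (N : ℕ) : (A ∩ Set.Iic N).Finite :=
  (Set.finite_Iic N).subset inter_subset_right

lemma ncard_inter_le (A : Set ℕ) (N : ℕ) : (A ∩ Set.Iic N).ncard ≤ N + 1 := by
  calc (A ∩ Set.Iic N).ncard ≤ (Set.Iic N).ncard :=
        Set.ncard_le_ncard inter_subset_right (Set.finite_Iic N)
    _ = N + 1 := by rw [← Finset.coe_Iic, Set.ncard_coe_finset, Nat.card_Iic]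

lemma dratio_nonneg (A : Set ℕ) (N : ℕ) : 0 ≤ dratio A N := by
  unfold dratio; positivity

lemma dratio_le_one (A : Set ℕ) (N : ℕ) : dratio A N ≤ 1 := by
  unfold dratio
  rw [div_le_one (by positivity)]
  exact_mod_cast ncard_inter_le A N

lemma dratio_mono {A B : Set ℕ} (h : A ⊆ B) (N : ℕ) : dratio A N ≤ dratio B N := by
  unfold dratio
  have : ((A ∩ Set.Iic N).ncard : ℝ) ≤ ((B ∩ Set.Iic N).ncard : ℝ) := by
    exact_mod_cast Set.ncard_le_ncard (Set.inter_subset_inter_left _ h) (finite_inter B N)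
  gcongr

lemma bddAbove (A : Set ℕ) : IsBoundedUnder (· ≤ ·) atTop (dratio A) :=
  Filter.isBoundedUnder_of ⟨1, fun N => dratio_le_one A N⟩

lemma bddBelow (A : Set ℕ) : IsBoundedUnder (· ≥ ·) atTop (dratio A) :=
  Filter.isBoundedUnder_of ⟨0, fun N => dratio_nonneg A N⟩

lemma cobdd (A : Set ℕ) : IsCoboundedUnder (· ≤ ·) atTop (dratio A) :=
  (bddBelow A).isCoboundedUnder_le

lemma upperDensity_nonneg (A : Set ℕ) : 0 ≤ upperDensity A :=
  le_limsup_of_frequently_le (Frequently.of_forall (dratio_nonneg A)) (bddAbove A)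

lemma upperDensity_mono {A B : Set ℕ} (h : A ⊆ B) : upperDensity A ≤ upperDensity B :=
  limsup_le_limsup (Eventually.of_forall fun N => dratio_mono h N) (cobdd A) (bddAbove B)

lemma nonempty_of_upperDensity_pos {A : Set ℕ} (h : 0 < upperDensity A) : A.Nonempty := by
  rcases A.eq_empty_or_nonempty with rfl | h'
  · rw [upperDensity_eq] at h
    have : dratio (∅ : Set ℕ) = fun _ => 0 := by
      funext N; unfold dratio; simp
    rw [this, limsup_const] at h; exact absurd h (lt_irrefl 0)
  · exact h'

lemma upperDensity_univ_pos : 0 < upperDensity (Set.univ : Set ℕ) := by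
  rw [upperDensity_eq]
  have : dratio (Set.univ : Set ℕ) = fun _ => 1 := by
    funext N
    unfold dratio
    rw [Set.univ_inter, ← Finset.coe_Iic, Set.ncard_coe_finset, Nat.card_Iic]
    push_cast; rw [div_self]; positivity
  rw [this, limsup_const]; norm_num

lemma frequently_lt (A : Set ℕ) {c : ℝ} (h : c < upperDensity A) :
    ∃ᶠ N in atTop, c < dratio A N :=
  frequently_lt_of_lt_limsup (cobdd A) h

lemma le_upperDensity_of_frequently {A : Set ℕ} {c : ℝ} (h : ∃ᶠ N in atTop, c ≤ dratio A N) :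
    c ≤ upperDensity A :=
  le_limsup_of_frequently_le h (bddAbove A)

lemma le_upperDensity_of_forall_lt {A : Set ℕ} {x : ℝ}
    (h : ∀ c, c < x → c ≤ upperDensity A) : x ≤ upperDensity A := by
  by_contra hc
  push_neg at hc
  have h1 := h ((upperDensity A + x) / 2) (by linarith)
  linarith

lemma ncard_shift_le (A : Set ℕ) (k N : ℕ) :
    (A ∩ Set.Iic (N + k)).ncard ≤ ({n | n + k ∈ A} ∩ Set.Iic N).ncard + k := by
  have hsub : A ∩ Set.Iic (N + k) ⊆ ((· + k) '' ({n | n + k ∈ A} ∩ Set.Iic N)) ∪ Set.Iio k := by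
    rintro a ⟨ha, haN⟩
    rcases lt_or_ge a k with h | h
    · exact Or.inr h
    · refine Or.inl ⟨a - k, ⟨?_, ?_⟩, show a - k + k = a by omega⟩
      · show a - k + k ∈ A
        rwa [Nat.sub_add_cancel h]
      · simp only [Set.mem_Iic] at haN ⊢; omega
  calc (A ∩ Set.Iic (N + k)).ncard
      ≤ (((· + k) '' ({n | n + k ∈ A} ∩ Set.Iic N)) ∪ Set.Iio k).ncard :=
        Set.ncard_le_ncard hsub (((finite_inter _ N).image _).union (Set.finite_Iio k))
    _ ≤ ((· + k) '' ({n | n + k ∈ A} ∩ Set.Iic N)).ncard + (Set.Iio k).ncard :=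
        Set.ncard_union_le _ _
    _ ≤ ({n | n + k ∈ A} ∩ Set.Iic N).ncard + k := by
        rw [Set.ncard_image_of_injective _ (add_left_injective k),
          ← Finset.coe_Iio, Set.ncard_coe_finset, Nat.card_Iio]

lemma ncard_le_image_shift (A : Set ℕ) (k N : ℕ) :
    (A ∩ Set.Iic N).ncard ≤ (((fun n => k + n) '' A) ∩ Set.Iic (N + k)).ncard := by
  have hsub : (fun n => k + n) '' (A ∩ Set.Iic N) ⊆
      ((fun n => k + n) '' A) ∩ Set.Iic (N + k) := by
    rintro _ ⟨a, ⟨ha, haN⟩, rfl⟩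
    refine ⟨⟨a, ha, rfl⟩, ?_⟩
    simp only [Set.mem_Iic] at haN ⊢; omega
  calc (A ∩ Set.Iic N).ncard
      = ((fun n => k + n) '' (A ∩ Set.Iic N)).ncard :=
        (Set.ncard_image_of_injective _ (add_right_injective k)).symm
    _ ≤ _ := Set.ncard_le_ncard hsub ((Set.finite_Iic _).subset inter_subset_right)

lemma upperDensity_le_shift (A : Set ℕ) (k : ℕ) :
    upperDensity A ≤ upperDensity {n | n + k ∈ A} := by
  set B := {n | n + k ∈ A} with hB
  apply le_upperDensity_of_forall_lt
  intro c hc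
  set c' := (c + upperDensity A) / 2 with hc'
  have hcc' : c < c' := by rw [hc']; linarith
  have hc'u : c' < upperDensity A := by rw [hc']; linarith
  obtain ⟨N₀, hN₀⟩ := exists_nat_gt ((k : ℝ) / (c' - c))
  have key : ∀ M, N₀ + k ≤ M → c' < dratio A M → c ≤ dratio B (M - k) := by
    intro M hM hlt
    set N := M - k with hNdef
    have hMN : M = N + k := by omega
    set a := ((A ∩ Set.Iic M).ncard : ℝ) with hadef
    set b := ((B ∩ Set.Iic N).ncard : ℝ) with hbdef
    have h1 : a ≤ b + k := by
      rw [hadef, hbdef]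
      exact_mod_cast hMN ▸ ncard_shift_le A k N
    have hN1 : (0:ℝ) < (N:ℝ) + 1 := by positivity
    have hM1 : (0:ℝ) < (M:ℝ) + 1 := by positivity
    have hNM : (N:ℝ) + 1 ≤ (M:ℝ) + 1 := by
      have : (N:ℝ) ≤ (M:ℝ) := by exact_mod_cast by omega
      linarith
    have ha0 : 0 ≤ a := by rw [hadef]; positivity
    have h2a : a / ((M:ℝ)+1) ≤ a / ((N:ℝ)+1) := by gcongr
    have h2b : (a - k) / ((N:ℝ)+1) ≤ b / ((N:ℝ)+1) := by gcongr; linarith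
    have h3 : (k:ℝ)/((N:ℝ)+1) ≤ c' - c := by
      have hε : 0 < c' - c := by linarith
      have hN0N : (N₀:ℝ) ≤ (N:ℝ) := by exact_mod_cast by omega
      rw [div_le_iff₀ hN1]
      rw [div_lt_iff₀ hε] at hN₀
      nlinarith
    have hADM : c' < a / ((M:ℝ)+1) := hlt
    have hgoal : c ≤ b / ((N:ℝ)+1) := by
      have := sub_div a (k:ℝ) ((N:ℝ)+1)
      linarith [h2a, h2b, h3, hADM, this.symm.le, this.le]
    exact hgoal
  apply le_upperDensity_of_frequently
  rw [frequently_atTop]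
  intro a
  have hfreq := frequently_lt A hc'u
  rw [frequently_atTop] at hfreq
  obtain ⟨M, hM1, hM2⟩ := hfreq (a + N₀ + k)
  exact ⟨M - k, by omega, key M (by omega) hM2⟩

lemma upperDensity_le_image (A : Set ℕ) (k : ℕ) :
    upperDensity A ≤ upperDensity ((fun n => k + n) '' A) := by
  set B := (fun n => k + n) '' A with hB
  apply le_upperDensity_of_forall_lt
  intro c hc
  set c' := (c + upperDensity A) / 2 with hc'
  have hcc' : c < c' := by rw [hc']; linarith
  have hc'u : c' < upperDensity A := by rw [hc']; linarith
  obtain ⟨N₀, hN₀⟩ := exists_nat_gt ((k : ℝ) / (c' - c))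
  have key : ∀ N, N₀ ≤ N → c' < dratio A N → c ≤ dratio B (N + k) := by
    intro N hN hlt
    set a := ((A ∩ Set.Iic N).ncard : ℝ) with hadef
    set b := ((B ∩ Set.Iic (N + k)).ncard : ℝ) with hbdef
    have h1 : a ≤ b := by
      rw [hadef, hbdef]; exact_mod_cast ncard_le_image_shift A k N
    have hN1 : (0:ℝ) < (N:ℝ) + 1 := by positivity
    have hM1 : (0:ℝ) < ((N:ℝ)+(k:ℝ)) + 1 := by positivity
    have ha0 : 0 ≤ a := by rw [hadef]; positivity
    have hb0 : 0 ≤ b := by rw [hbdef]; positivity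
    have haN : a ≤ (N:ℝ) + 1 := by
      rw [hadef]; exact_mod_cast ncard_inter_le A N
    have h2 : a/((N:ℝ)+1) - (k:ℝ)/((N:ℝ)+1) ≤ a / (((N:ℝ)+(k:ℝ))+1) := by
      rw [div_sub_div_same, div_le_div_iff₀ hN1 hM1]
      nlinarith [Nat.cast_nonneg (α := ℝ) k]
    have h3 : (k:ℝ)/((N:ℝ)+1) ≤ c' - c := by
      have hε : 0 < c' - c := by linarith
      have hN0N : (N₀:ℝ) ≤ (N:ℝ) := by exact_mod_cast hN
      rw [div_le_iff₀ hN1]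
      rw [div_lt_iff₀ hε] at hN₀
      nlinarith
    have hbig : a / (((N:ℝ)+(k:ℝ))+1) ≤ b / (((N:ℝ)+(k:ℝ))+1) := by gcongr
    have : dratio B (N + k) = b / (((N:ℝ)+(k:ℝ))+1) := by
      rw [dratio, hbdef]; push_cast; ring_nf
    rw [this]
    have hAN : c' < a/((N:ℝ)+1) := hlt
    linarith
  apply le_upperDensity_of_frequently
  rw [frequently_atTop]
  intro a
  have hfreq := frequently_lt A hc'u
  rw [frequently_atTop] at hfreq
  obtain ⟨N, hN1, hN2⟩ := hfreq (a + N₀)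
  exact ⟨N + k, by omega, key N (by omega) hN2⟩

section Top

variable {X : Type*} [TopologicalSpace X] {f : X → X}

lemma returnSet_mono {x : X} {U V : Set X} (h : U ⊆ V) :
    returnSet f x U ⊆ returnSet f x V := fun _ hn => h hn

lemma returnSet_shift (x : X) (U : Set X) (k : ℕ) :
    returnSet f (f^[k] x) U = {n | n + k ∈ returnSet f x U} := by
  ext n
  simp only [returnSet, mem_setOf_eq, Function.iterate_add_apply]

lemma ufhc_to_hc {x : X} (hx : IsUpperFrequentlyHypercyclicVec f x) :
    IsHypercyclicVec f x := by
  rw [IsHypercyclicVec, dense_iff_inter_open]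
  intro U hU hne
  obtain ⟨n, hn⟩ := nonempty_of_upperDensity_pos (hx U hU hne)
  exact ⟨f^[n] x, hn, ⟨n, rfl⟩⟩

lemma ufhc_to_ufrec {x : X} (hx : IsUpperFrequentlyHypercyclicVec f x) :
    IsUpperFrequentlyRecurrentVec f x := by
  intro U hU
  obtain ⟨V, hVU, hVopen, hxV⟩ := mem_nhds_iff.1 hU
  exact lt_of_lt_of_le (hx V hVopen ⟨x, hxV⟩)
    (upperDensity_mono (returnSet_mono hVU))

lemma hc_ufrec_to_ufhc (hf : Continuous f) {x : X} (hx : IsHypercyclicVec f x)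
    (hrec : IsUpperFrequentlyRecurrentVec f x) :
    IsUpperFrequentlyHypercyclicVec f x := by
  intro U hU hne
  obtain ⟨y, ⟨m, rfl⟩, hyU⟩ := hx.exists_mem_open hU hne
  have hV : (f^[m]) ⁻¹' U ∈ nhds x := (hU.preimage (hf.iterate m)).mem_nhds hyU
  have h1 := hrec _ hV
  have h2 : (fun n => m + n) '' returnSet f x ((f^[m]) ⁻¹' U) ⊆ returnSet f x U := by
    rintro _ ⟨n, hn, rfl⟩
    show f^[m + n] x ∈ U
    rw [Function.iterate_add_apply]
    exact hn
  calc (0:ℝ) < upperDensity (returnSet f x ((f^[m]) ⁻¹' U)) := h1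
    _ ≤ upperDensity ((fun n => m + n) '' returnSet f x ((f^[m]) ⁻¹' U)) :=
        upperDensity_le_image _ m
    _ ≤ upperDensity (returnSet f x U) := upperDensity_mono h2

open Classical in
lemma returnSet_inter_eq (x : X) (U : Set X) (N : ℕ) :
    returnSet f x U ∩ Set.Iic N = ↑((Finset.Iic N).filter fun n => f^[n] x ∈ U) := by
  ext n
  constructor
  · rintro ⟨h1, h2⟩
    simp only [Finset.mem_coe, Finset.mem_filter, Finset.mem_Iic]
    exact ⟨h2, h1⟩
  · intro h
    simp only [Finset.mem_coe, Finset.mem_filter, Finset.mem_Iic] at h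
    exact ⟨h.2, h.1⟩

open Classical in
lemma isOpen_ncard_le (hf : Continuous f) {U : Set X} (hU : IsOpen U) (m N : ℕ) :
    IsOpen {x : X | m ≤ (returnSet f x U ∩ Set.Iic N).ncard} := by
  have hset : {x : X | m ≤ (returnSet f x U ∩ Set.Iic N).ncard} =
      ⋃ s ∈ {s : Finset ℕ | s ⊆ Finset.Iic N ∧ s.card = m}, ⋂ n ∈ s, (f^[n]) ⁻¹' U := by
    ext x
    simp only [mem_setOf_eq, mem_iUnion, mem_iInter, mem_preimage]
    constructor
    · intro h
      rw [returnSet_inter_eq, Set.ncard_coe_finset] at h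
      obtain ⟨s, hs, hcard⟩ := Finset.exists_subset_card_eq h
      exact ⟨s, ⟨hs.trans (Finset.filter_subset _ _), hcard⟩,
        fun n hn => (Finset.mem_filter.1 (hs hn)).2⟩
    · rintro ⟨s, ⟨hsub, hcard⟩, hmem⟩
      rw [returnSet_inter_eq, Set.ncard_coe_finset]
      calc m = s.card := hcard.symm
        _ ≤ _ := Finset.card_le_card fun n hn =>
            Finset.mem_filter.2 ⟨hsub hn, hmem n hn⟩
  rw [hset]
  exact isOpen_biUnion fun s _ => isOpen_biInter_finset fun n _ => hU.preimage (hf.iterate n)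

lemma isOpen_lt_dratio (hf : Continuous f) {U : Set X} (hU : IsOpen U) (c : ℝ) (N : ℕ) :
    IsOpen {x : X | c < dratio (returnSet f x U) N} := by
  have hset : {x : X | c < dratio (returnSet f x U) N} =
      ⋃ (m : ℕ) (_ : c < (m:ℝ)/((N:ℝ)+1)), {x : X | m ≤ (returnSet f x U ∩ Set.Iic N).ncard} := by
    ext x
    simp only [mem_setOf_eq, mem_iUnion]
    constructor
    · intro h
      exact ⟨(returnSet f x U ∩ Set.Iic N).ncard, h, le_refl _⟩
    · rintro ⟨m, hm, hle⟩
      refine lt_of_lt_of_le hm ?_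
      unfold dratio
      have hc : (m:ℝ) ≤ ((returnSet f x U ∩ Set.Iic N).ncard : ℝ) := by exact_mod_cast hle
      gcongr
  rw [hset]
  exact isOpen_iUnion fun m => isOpen_iUnion fun _ => isOpen_ncard_le hf hU m N

lemma setOf_le_upperDensity_eq (U : Set X) (δ : ℝ) :
    {x : X | δ ≤ upperDensity (returnSet f x U)} =
      ⋂ (i : ℕ) (k : ℕ), ⋃ (N : ℕ) (_ : k ≤ N),
        {x : X | δ - 1/((i:ℝ)+1) < dratio (returnSet f x U) N} := by
  ext x
  simp only [mem_setOf_eq, mem_iInter, mem_iUnion]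
  constructor
  · intro h i k
    have h1 : δ - 1/((i:ℝ)+1) < upperDensity (returnSet f x U) := by
      have : (0:ℝ) < 1/((i:ℝ)+1) := by positivity
      linarith
    have h2 := frequently_lt _ h1
    rw [frequently_atTop] at h2
    obtain ⟨N, hN, hlt⟩ := h2 k
    exact ⟨N, hN, hlt⟩
  · intro h
    have key : ∀ i : ℕ, δ - 1/((i:ℝ)+1) ≤ upperDensity (returnSet f x U) := by
      intro i
      apply le_upperDensity_of_frequently
      rw [frequently_atTop]
      intro k
      obtain ⟨N, hN, hlt⟩ := h i k
      exact ⟨N, hN, hlt.le⟩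
    by_contra hcon
    push_neg at hcon
    obtain ⟨i, hi⟩ := exists_nat_one_div_lt (sub_pos.2 hcon)
    have := key i
    linarith

lemma residual_S (hf : Continuous f) {U : Set X} (hU : IsOpen U) {x₀ : X}
    (hx₀ : IsHypercyclicVec f x₀) {δ : ℝ}
    (horb : ∀ k : ℕ, δ ≤ upperDensity (returnSet f (f^[k] x₀) U)) :
    {x : X | δ ≤ upperDensity (returnSet f x U)} ∈ residual X := by
  rw [setOf_le_upperDensity_eq]
  rw [countable_iInter_mem]
  intro i
  rw [countable_iInter_mem]
  intro k
  apply residual_of_dense_open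
  · exact isOpen_iUnion fun N => isOpen_iUnion fun _ => isOpen_lt_dratio hf hU _ N
  · apply Dense.mono ?_ hx₀
    rintro _ ⟨m, rfl⟩
    have hm : f^[m] x₀ ∈ {x : X | δ ≤ upperDensity (returnSet f x U)} := horb m
    rw [setOf_le_upperDensity_eq] at hm
    simp only [mem_iInter] at hm
    exact hm i k

lemma main_residual [SecondCountableTopology X] (hf : Continuous f) {x₀ : X}
    (hx₀ : IsUpperFrequentlyHypercyclicVec f x₀) :
    {x : X | IsUpperFrequentlyHypercyclicVec f x} ∈ residual X := by
  have hhc : IsHypercyclicVec f x₀ := ufhc_to_hc hx₀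
  have hM : (⋂ U ∈ TopologicalSpace.countableBasis X,
      {x : X | upperDensity (returnSet f x₀ U) ≤ upperDensity (returnSet f x U)})
        ∈ residual X := by
    rw [countable_bInter_mem (TopologicalSpace.countable_countableBasis X)]
    intro U hU
    refine residual_S hf (TopologicalSpace.isOpen_of_mem_countableBasis hU) hhc fun k => ?_
    rw [returnSet_shift]
    exact upperDensity_le_shift _ k
  refine mem_of_superset hM fun x hx => ?_
  simp only [mem_iInter, mem_setOf_eq] at hx ⊢
  intro U hUopen hUne
  obtain ⟨p, hp⟩ := hUne
  obtain ⟨V, hVB, hpV, hVU⟩ :=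
    (TopologicalSpace.isBasis_countableBasis X).exists_subset_of_mem_open hp hUopen
  calc (0:ℝ) < upperDensity (returnSet f x₀ V) :=
        hx₀ V (TopologicalSpace.isOpen_of_mem_countableBasis hVB) ⟨p, hpV⟩
    _ ≤ upperDensity (returnSet f x V) := hx V hVB
    _ ≤ upperDensity (returnSet f x U) := upperDensity_mono (returnSet_mono hVU)

lemma dense_tail [T1Space X] (h1 : ∀ p : X, ¬ IsOpen ({p} : Set X)) {x : X}
    (hx : IsHypercyclicVec f x) (m : ℕ) {U : Set X} (hU : IsOpen U) (hne : U.Nonempty) :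
    ∃ n, f^[n + m] x ∈ U := by
  set F := (fun i => f^[i] x) '' (Set.Iio m) with hF
  have hFfin : F.Finite := (Set.finite_Iio m).image _
  by_cases hUF : U ⊆ F
  · exfalso
    obtain ⟨p, hp⟩ := hne
    apply h1 p
    have hpeq : ({p} : Set X) = U ∩ (F \ {p})ᶜ := by
      apply Set.Subset.antisymm
      · rintro q rfl
        exact ⟨hp, by simp⟩
      · rintro q ⟨hqU, hq2⟩
        have hqF := hUF hqU
        simp only [mem_compl_iff, mem_diff, mem_singleton_iff, not_and, not_not] at hq2
        simp only [mem_singleton_iff]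
        exact hq2 hqF
    rw [hpeq]
    exact hU.inter ((hFfin.diff).isClosed).isOpen_compl
  · rw [Set.not_subset] at hUF
    obtain ⟨y, hyU, hyF⟩ := hUF
    have hopen : IsOpen (U \ F) := hU.sdiff hFfin.isClosed
    obtain ⟨_, ⟨n, rfl⟩, hnU, hnF⟩ := hx.exists_mem_open hopen ⟨y, hyU, hyF⟩
    have hnm : m ≤ n := by
      by_contra h'
      push_neg at h'
      exact hnF ⟨n, h', rfl⟩
    exact ⟨n - m, by rwa [Nat.sub_add_cancel hnm]⟩

lemma hc_residual_of [SecondCountableTopology X] [T1Space X] (hf : Continuous f)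
    (h1 : ∀ p : X, ¬ IsOpen ({p} : Set X)) {x₀ : X} (hx₀ : IsHypercyclicVec f x₀) :
    {x : X | IsHypercyclicVec f x} ∈ residual X := by
  have hsup : (⋂ U ∈ TopologicalSpace.countableBasis X,
      {x : X | U.Nonempty → ∃ n, f^[n] x ∈ U}) ⊆ {x : X | IsHypercyclicVec f x} := by
    intro x hx
    simp only [mem_iInter, mem_setOf_eq] at hx
    simp only [mem_setOf_eq]
    rw [IsHypercyclicVec, (TopologicalSpace.isBasis_countableBasis X).dense_iff]
    intro o ho hone
    obtain ⟨n, hn⟩ := hx o ho hone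
    exact ⟨f^[n] x, hn, ⟨n, rfl⟩⟩
  refine mem_of_superset ?_ hsup
  rw [countable_bInter_mem (TopologicalSpace.countable_countableBasis X)]
  intro U hUB
  by_cases hne : U.Nonempty
  · have hop : IsOpen U := TopologicalSpace.isOpen_of_mem_countableBasis hUB
    have hdense : Dense (⋃ n : ℕ, (f^[n]) ⁻¹' U) := by
      rw [dense_iff_inter_open]
      intro V hV hVne
      obtain ⟨_, ⟨m, rfl⟩, hmV⟩ := hx₀.exists_mem_open hV hVne
      obtain ⟨n, hn⟩ := dense_tail h1 hx₀ m hop hne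
      refine ⟨f^[m] x₀, hmV, mem_iUnion.2 ⟨n, ?_⟩⟩
      rw [mem_preimage, ← Function.iterate_add_apply]
      exact hn
    refine mem_of_superset (residual_of_dense_open
      (isOpen_iUnion fun n => hop.preimage (hf.iterate n)) hdense) fun x hx => ?_
    intro _
    simpa using hx
  · refine mem_of_superset univ_mem fun x _ => ?_
    simp only [mem_setOf_eq]
    intro h
    exact absurd h hne

end Top

end UFH

section Main

variable {𝕜 : Type*} [RCLike 𝕜] {X : Type*} [AddCommGroup X] [Module 𝕜 X]
    [UniformSpace X] [IsUniformAddGroup X] [ContinuousSMul 𝕜 X] [CompleteSpace X]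
    [TopologicalSpace.MetrizableSpace X] [Module ℝ X] [IsScalarTower ℝ 𝕜 X]
    [LocallyConvexSpace ℝ X]

omit [CompleteSpace X] [TopologicalSpace.MetrizableSpace X] [LocallyConvexSpace ℝ X] in
lemma aux_not_isOpen_singleton (𝕜' : Type*) [RCLike 𝕜'] [Module 𝕜' X] [ContinuousSMul 𝕜' X]
    [IsScalarTower ℝ 𝕜' X] [Nontrivial X] (p : X) : ¬ IsOpen ({p} : Set X) := by
  intro hop
  obtain ⟨v, hv⟩ := exists_ne (0 : X)
  have h0 : IsOpen ({0} : Set X) := by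
    have heq : ({0} : Set X) = (fun y : X => y + p) ⁻¹' {p} := by
      ext y
      simp [add_eq_right]
    rw [heq]
    exact hop.preimage (continuous_id.add continuous_const)
  have hcont : Continuous fun t : ℝ => t • v := by
    have heq : (fun t : ℝ => t • v) = fun t : ℝ => ((t : 𝕜') • v) := by
      funext t
      exact RCLike.real_smul_eq_coe_smul (K := 𝕜') t v
    rw [heq]
    exact RCLike.continuous_ofReal.smul continuous_const
  have hopen2 : IsOpen ((fun t : ℝ => t • v) ⁻¹' {0}) := h0.preimage hcont
  have heq2 : (fun t : ℝ => t • v) ⁻¹' {0} = {0} := by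
    ext t
    simp only [mem_preimage, mem_singleton_iff]
    constructor
    · intro h
      by_contra ht
      apply hv
      have h2 := congrArg (fun y => t⁻¹ • y) h
      simpa [inv_smul_smul₀ ht] using h2
    · rintro rfl
      exact zero_smul ℝ v
  rw [heq2] at hopen2
  obtain ⟨z, hz1, hz2⟩ := (dense_compl_singleton (0:ℝ)).exists_mem_open hopen2 ⟨0, rfl⟩
  exact hz1 hz2

lemma aux_cg : (uniformity X).IsCountablyGenerated := by
  rw [uniformity_eq_comap_nhds_zero X]
  infer_instance

end Main

theorem stmt2 {𝕜 : Type*} [RCLike 𝕜] {X : Type*} [AddCommGroup X] [Module 𝕜 X]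
    [UniformSpace X] [IsUniformAddGroup X] [ContinuousSMul 𝕜 X] [CompleteSpace X]
    [TopologicalSpace.MetrizableSpace X] [Module ℝ X] [IsScalarTower ℝ 𝕜 X]
    [LocallyConvexSpace ℝ X] (T : X →L[𝕜] X) :
    [∃ x : X, IsUpperFrequentlyHypercyclicVec (⇑T) x,
     (∃ x : X, IsHypercyclicVec (⇑T) x) ∧
       {x : X | IsUpperFrequentlyRecurrentVec (⇑T) x} ∈ residual X,
     (∃ x : X, IsHypercyclicVec (⇑T) x) ∧
       ¬ IsMeagre {x : X | IsUpperFrequentlyRecurrentVec (⇑T) x},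
     ∃ x : X, IsHypercyclicVec (⇑T) x ∧ IsUpperFrequentlyRecurrentVec (⇑T) x].TFAE ∧
    ((∃ x : X, IsUpperFrequentlyHypercyclicVec (⇑T) x) →
      {x : X | IsHypercyclicVec (⇑T) x ∧ IsUpperFrequentlyRecurrentVec (⇑T) x} ∈ residual X) ∧
    (∀ x : X, IsHypercyclicVec (⇑T) x → IsUpperFrequentlyRecurrentVec (⇑T) x →
      IsUpperFrequentlyHypercyclicVec (⇑T) x) := by
  have hTc : Continuous ⇑T := T.continuous
  haveI hcg : (uniformity X).IsCountablyGenerated := aux_cg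
  have claim3 : ∀ x : X, IsHypercyclicVec (⇑T) x → IsUpperFrequentlyRecurrentVec (⇑T) x →
      IsUpperFrequentlyHypercyclicVec (⇑T) x :=
    fun x hx hr => UFH.hc_ufrec_to_ufhc hTc hx hr
  have claim2 : (∃ x : X, IsUpperFrequentlyHypercyclicVec (⇑T) x) →
      {x : X | IsHypercyclicVec (⇑T) x ∧ IsUpperFrequentlyRecurrentVec (⇑T) x}
        ∈ residual X := by
    rintro ⟨x₀, hx₀⟩
    haveI : TopologicalSpace.SeparableSpace X :=
      ⟨⟨_, countable_range _, UFH.ufhc_to_hc hx₀⟩⟩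
    haveI := UniformSpace.secondCountable_of_separable X
    refine mem_of_superset (UFH.main_residual hTc hx₀) fun x hx => ?_
    exact ⟨UFH.ufhc_to_hc hx, UFH.ufhc_to_ufrec hx⟩
  refine ⟨?_, claim2, claim3⟩
  tfae_have 1 → 2 := by
    rintro ⟨x₀, hx₀⟩
    exact ⟨⟨x₀, UFH.ufhc_to_hc hx₀⟩,
      mem_of_superset (claim2 ⟨x₀, hx₀⟩) fun x hx => hx.2⟩
  tfae_have 2 → 3 := by
    rintro ⟨hhc, hres⟩
    refine ⟨hhc, ?_⟩
    intro hmea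
    have hmea' : {x : X | IsUpperFrequentlyRecurrentVec (⇑T) x}ᶜ ∈ residual X := hmea
    haveI : Nonempty X := ⟨0⟩
    have hd := dense_of_mem_residual (Filter.inter_mem hres hmea')
    rw [inter_compl_self] at hd
    obtain ⟨y, hy⟩ := hd.nonempty
    exact hy
  tfae_have 3 → 4 := by
    rintro ⟨⟨x₀, hx₀⟩, hnm⟩
    rcases subsingleton_or_nontrivial X with hsub | hnt
    · refine ⟨x₀, hx₀, fun U hU => ?_⟩
      have hret : returnSet (⇑T) x₀ U = Set.univ := by
        ext n
        simp only [returnSet, mem_setOf_eq, mem_univ, iff_true]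
        have h : (⇑T)^[n] x₀ = x₀ := Subsingleton.elim _ _
        rw [h]
        exact mem_of_mem_nhds hU
      rw [hret]
      exact UFH.upperDensity_univ_pos
    · haveI : TopologicalSpace.SeparableSpace X := ⟨⟨_, countable_range _, hx₀⟩⟩
      haveI := UniformSpace.secondCountable_of_separable X
      have hres := UFH.hc_residual_of hTc (fun p => aux_not_isOpen_singleton 𝕜 p) hx₀
      by_contra hno
      push_neg at hno
      apply hnm
      show {x : X | IsUpperFrequentlyRecurrentVec (⇑T) x}ᶜ ∈ residual X
      refine mem_of_superset hres fun x hx => ?_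
      intro hrec
      exact hno x hx hrec
  tfae_have 4 → 1 := by
    rintro ⟨x, hx, hr⟩
    exact ⟨x, claim3 x hx hr⟩
  tfae_finish
end

section
/- Let X be a Fréchet space and T : X → X a continuous linear operator. Then T is frequently hypercyclic if and only if T admits a vector that is both hypercyclic and frequently recurrent. Moreover, every vector that is both hypercyclic and frequently recurrent for T is frequently hypercyclic. -/
open Filter Topology Set

private lemma ratio_nonneg (A : Set ℕ) (N : ℕ) :
    0 ≤ ((A ∩ Set.Iic N).ncard : ℝ) / (N + 1) := by positivity

private lemma ratio_le_one (A : Set ℕ) (N : ℕ) :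
    ((A ∩ Set.Iic N).ncard : ℝ) / (N + 1) ≤ 1 := by
  rw [div_le_one (by positivity)]
  have h1 : (A ∩ Set.Iic N).ncard ≤ (Set.Iic N).ncard :=
    Set.ncard_le_ncard inter_subset_right (Set.finite_Iic N)
  have h2 : (Set.Iic N).ncard = N + 1 := by
    rw [← Finset.coe_Iic, Set.ncard_coe_finset, Nat.card_Iic]
  calc ((A ∩ Set.Iic N).ncard : ℝ) ≤ ((Set.Iic N).ncard : ℝ) := by exact_mod_cast h1
    _ = N + 1 := by rw [h2]; push_cast; ring

private lemma ratio_boundedBelow (A : Set ℕ) :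
    Filter.atTop.IsBoundedUnder (· ≥ ·)
      (fun N : ℕ => ((A ∩ Set.Iic N).ncard : ℝ) / (N + 1)) :=
  Filter.isBoundedUnder_of ⟨0, fun N => ratio_nonneg A N⟩

private lemma ratio_coboundedBelow (A : Set ℕ) :
    Filter.atTop.IsCoboundedUnder (· ≥ ·)
      (fun N : ℕ => ((A ∩ Set.Iic N).ncard : ℝ) / (N + 1)) :=
  Filter.IsBoundedUnder.isCoboundedUnder_ge
    (Filter.isBoundedUnder_of ⟨1, fun N => ratio_le_one A N⟩)

private lemma lowerDensity_mono {A B : Set ℕ} (h : A ⊆ B) :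
    lowerDensity A ≤ lowerDensity B := by
  apply Filter.liminf_le_liminf
  · refine Filter.Eventually.of_forall fun N => ?_
    apply div_le_div_of_nonneg_right ?_ (by positivity)
    · exact_mod_cast Set.ncard_le_ncard (inter_subset_inter_left _ h)
        ((Set.finite_Iic N).subset inter_subset_right)
  · exact ratio_boundedBelow A
  · exact ratio_coboundedBelow B

private lemma lowerDensity_shift_pos {A : Set ℕ} (m : ℕ) (h : 0 < lowerDensity A) :
    0 < lowerDensity ((fun k => m + k) '' A) := by
  set L := lowerDensity A with hL
  -- eventually the original ratio exceeds L/2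
  have hlt : L / 2 < Filter.atTop.liminf
      (fun N : ℕ => ((A ∩ Set.Iic N).ncard : ℝ) / (N + 1)) := by
    have hrfl : Filter.atTop.liminf
        (fun N : ℕ => ((A ∩ Set.Iic N).ncard : ℝ) / (N + 1)) = L := rfl
    rw [hrfl]; linarith
  have hev : ∀ᶠ K in atTop, L / 2 < ((A ∩ Set.Iic K).ncard : ℝ) / (K + 1) :=
    Filter.eventually_lt_of_lt_liminf hlt (ratio_boundedBelow A)
  have hev2 : ∀ᶠ N in atTop, L / 2 <
      ((A ∩ Set.Iic (N - m)).ncard : ℝ) / ((N - m : ℕ) + 1) :=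
    (tendsto_sub_atTop_nat m).eventually hev
  have key : ∀ᶠ N in atTop, L / 4 ≤
      ((((fun k => m + k) '' A) ∩ Set.Iic N).ncard : ℝ) / (N + 1) := by
    filter_upwards [hev2, Filter.eventually_ge_atTop (2 * m)] with N h1 h2
    have hmN : m ≤ N := by omega
    have heq : ((fun k => m + k) '' A) ∩ Set.Iic N
        = (fun k => m + k) '' (A ∩ Set.Iic (N - m)) := by
      ext n
      simp only [Set.mem_inter_iff, Set.mem_image, Set.mem_Iic]
      constructor
      · rintro ⟨⟨a, ha, rfl⟩, hn⟩
        exact ⟨a, ⟨ha, by omega⟩, rfl⟩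
      · rintro ⟨a, ⟨ha, haN⟩, rfl⟩
        exact ⟨⟨a, ha, rfl⟩, by omega⟩
    rw [heq, Set.ncard_image_of_injective _ (add_right_injective m)]
    set c : ℝ := ((A ∩ Set.Iic (N - m)).ncard : ℝ) with hc
    have hc0 : 0 ≤ c := by positivity
    set K := N - m with hK
    have hNK : N = K + m := by omega
    have hKm : m ≤ K := by omega
    have hpos1 : (0 : ℝ) < (K : ℝ) + 1 := by positivity
    have hpos2 : (0 : ℝ) < (N : ℝ) + 1 := by positivity
    rw [lt_div_iff₀ hpos1] at h1
    rw [le_div_iff₀ hpos2]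
    have hcast : (N : ℝ) = (K : ℝ) + (m : ℝ) := by exact_mod_cast congrArg Nat.cast hNK
    have hmK : (m : ℝ) ≤ (K : ℝ) := by exact_mod_cast hKm
    nlinarith [h.le]
  have : L / 4 ≤ lowerDensity ((fun k => m + k) '' A) :=
    Filter.le_liminf_of_le (ratio_coboundedBelow _) key
  linarith

/-- A hypercyclic, frequently recurrent vector is frequently hypercyclic. -/
private lemma hc_fr_imp_fhc {X : Type*} [TopologicalSpace X] {T : X → X}
    (hT : Continuous T) {x : X} (hhc : IsHypercyclicVec T x)
    (hfr : IsFrequentlyRecurrentVec T x) : IsFrequentlyHypercyclicVec T x := by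
  intro U hU hUne
  obtain ⟨y, ⟨m, rfl⟩, hyU⟩ := hhc.exists_mem_open hU hUne
  have hVopen : IsOpen ((T^[m]) ⁻¹' U) := hU.preimage (hT.iterate m)
  have hVmem : (T^[m]) ⁻¹' U ∈ nhds x := hVopen.mem_nhds hyU
  have hpos := hfr _ hVmem
  have hsub : (fun k => m + k) '' (returnSet T x ((T^[m]) ⁻¹' U)) ⊆ returnSet T x U := by
    rintro n ⟨k, hk, rfl⟩
    simp only [returnSet, Set.mem_setOf_eq, Set.mem_preimage] at hk ⊢
    rw [Function.iterate_add_apply]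
    exact hk
  exact lt_of_lt_of_le (lowerDensity_shift_pos m hpos) (lowerDensity_mono hsub)

private lemma lowerDensity_empty : lowerDensity (∅ : Set ℕ) = 0 := by
  have : (fun N : ℕ => (((∅ : Set ℕ) ∩ Set.Iic N).ncard : ℝ) / (N + 1)) = fun _ => 0 := by
    funext N; simp
  rw [lowerDensity, this, Filter.liminf_const]

private lemma fhc_imp_hc {X : Type*} [TopologicalSpace X] {T : X → X} {x : X}
    (h : IsFrequentlyHypercyclicVec T x) : IsHypercyclicVec T x := by
  rw [IsHypercyclicVec, dense_iff_inter_open]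
  intro U hU hUne
  have hpos := h U hU hUne
  have hne : (returnSet T x U).Nonempty := by
    by_contra hc
    rw [Set.not_nonempty_iff_eq_empty] at hc
    rw [returnSet] at hc
    rw [IsFrequentlyHypercyclicVec] at h
    have := h U hU hUne
    rw [returnSet, hc, lowerDensity_empty] at this
    exact lt_irrefl 0 this
  obtain ⟨n, hn⟩ := hne
  exact ⟨T^[n] x, hn, n, rfl⟩

private lemma fhc_imp_fr {X : Type*} [TopologicalSpace X] {T : X → X} {x : X}
    (h : IsFrequentlyHypercyclicVec T x) : IsFrequentlyRecurrentVec T x := by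
  intro U hU
  obtain ⟨V, hVU, hVopen, hxV⟩ := mem_nhds_iff.mp hU
  exact lt_of_lt_of_le (h V hVopen ⟨x, hxV⟩)
    (lowerDensity_mono (fun n hn => hVU hn))

theorem stmt3 {𝕜 : Type*} [RCLike 𝕜] {X : Type*} [AddCommGroup X] [Module 𝕜 X]
    [UniformSpace X] [IsUniformAddGroup X] [ContinuousSMul 𝕜 X] [CompleteSpace X]
    [TopologicalSpace.MetrizableSpace X] [Module ℝ X] [IsScalarTower ℝ 𝕜 X]
    [LocallyConvexSpace ℝ X] (T : X →L[𝕜] X) :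
    ((∃ x : X, IsFrequentlyHypercyclicVec (⇑T) x) ↔
      (∃ x : X, IsHypercyclicVec (⇑T) x ∧ IsFrequentlyRecurrentVec (⇑T) x)) ∧
    (∀ x : X, IsHypercyclicVec (⇑T) x → IsFrequentlyRecurrentVec (⇑T) x →
      IsFrequentlyHypercyclicVec (⇑T) x) := by
  constructor
  · constructor
    · rintro ⟨x, hx⟩
      exact ⟨x, fhc_imp_hc hx, fhc_imp_fr hx⟩
    · rintro ⟨x, hhc, hfr⟩
      exact ⟨x, hc_fr_imp_fhc T.continuous hhc hfr⟩
  · exact fun x hhc hfr => hc_fr_imp_fhc T.continuous hhc hfr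
end

section
/- Let X be a Fréchet space and T : X → X a continuous linear operator. Then no periodic point of T is an accumulation point of the orbit of a uniformly recurrent vector: if y is periodic for T and x is uniformly recurrent for T, then y is not an accumulation point of {T^n x : n ∈ ℕ}. In particular, no uniformly recurrent vector for T is hypercyclic. -/
open Filter Topology Set

lemma my_iter_mod {X : Type*} (T : X → X) (y : X) (p : ℕ) (hy : T^[p] y = y) :
    ∀ n, T^[n] y = T^[n % p] y := by
  intro n
  conv_lhs => rw [← Nat.mod_add_div n p, Function.iterate_add_apply]
  congr 1
  induction n / p with
  | zero => simp
  | succ k ih => rw [Nat.mul_succ, Function.iterate_add_apply, hy, ih]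

lemma my_not_accPt_of_finite {X : Type*} [TopologicalSpace X] [T1Space X] {S : Set X}
    (hS : S.Finite) (y : X) : ¬ AccPt y (𝓟 S) := by
  intro h
  rw [accPt_iff_nhds] at h
  have hcl : IsClosed (S \ {y}) := (hS.subset diff_subset).isClosed
  obtain ⟨z, hz, hzy⟩ := h (S \ {y})ᶜ (hcl.isOpen_compl.mem_nhds (by simp))
  exact hz.1 ⟨hz.2, hzy⟩

lemma my_key {X : Type*} [AddCommGroup X] [TopologicalSpace X] [IsTopologicalAddGroup X]
    {T : X → X} (hT : Continuous T) {x y : X} {p : ℕ} (hp : 1 ≤ p) (hy : T^[p] y = y)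
    (hx : IsUniformlyRecurrentVec T x)
    (hacc : y ∈ closure (Set.range fun n : ℕ => T^[n] x)) :
    x ∈ closure ((fun j => T^[j] y) '' Set.Iio p) := by
  rw [mem_closure_iff_nhds]
  intro W hW
  -- B is a 0-neighbourhood coding membership of x - · in W
  have hB : (fun v : X => x - v) ⁻¹' W ∈ 𝓝 (0 : X) := by
    have hc : Continuous fun v : X => x - v := continuous_const.sub continuous_id
    have := hc.continuousAt (x := (0 : X))
    rw [ContinuousAt, sub_zero] at this
    exact this hW
  set B := (fun v : X => x - v) ⁻¹' W with hBdef
  -- half neighbourhood with subtraction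
  obtain ⟨V₀, hV₀, hhalf⟩ := exists_nhds_zero_half hB
  set V : Set X := V₀ ∩ (-V₀) with hVdef
  have hV : V ∈ 𝓝 (0 : X) := Filter.inter_mem hV₀ (neg_mem_nhds_zero X hV₀)
  have hsub : ∀ a ∈ V, ∀ b ∈ V, a - b ∈ B := by
    intro a ha b hb
    have : -b ∈ V₀ := Set.mem_neg.mp hb.2
    simpa [sub_eq_add_neg] using hhalf a ha.1 (-b) this
  -- U neighbourhood of x
  have hU : (fun v : X => v - x) ⁻¹' V ∈ 𝓝 x := by
    have hc : Continuous fun v : X => v - x := continuous_id.sub continuous_const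
    have := hc.continuousAt (x := x)
    rw [ContinuousAt, sub_self] at this
    exact this hV
  obtain ⟨m, hm⟩ := hx _ hU
  -- neighbourhood of y pulled back through iterates up to m
  have hcontIter : ∀ j : ℕ, Continuous (T^[j]) := fun j => hT.iterate j
  have hVy : (⋂ j : Fin (m + 1), (fun v => T^[(j : ℕ)] v - T^[(j : ℕ)] y) ⁻¹' V) ∈ 𝓝 y := by
    apply Filter.iInter_mem.mpr
    intro j
    have hc : Continuous fun v => T^[(j : ℕ)] v - T^[(j : ℕ)] y :=
      (hcontIter j).sub continuous_const
    have := hc.continuousAt (x := y)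
    rw [ContinuousAt, sub_self] at this
    exact this hV
  obtain ⟨z, hz, n, hn⟩ := mem_closure_iff_nhds.mp hacc _ hVy
  obtain ⟨t, ht, hnt, htm⟩ := hm n
  have hjm : t - n < m + 1 := by omega
  have hzin := Set.mem_iInter.mp hz ⟨t - n, hjm⟩
  rw [← hn] at hzin
  simp only [Set.mem_preimage] at hzin
  have hiter : T^[t - n] (T^[n] x) = T^[t] x := by
    rw [← Function.iterate_add_apply]
    congr 1
    omega
  rw [hiter] at hzin
  -- return time membership
  have htx : T^[t] x - x ∈ V := ht
  have hfinal : x - T^[t - n] y ∈ B := by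
    have h1 := hsub _ hzin _ htx
    have h2 : T^[t] x - T^[t - n] y - (T^[t] x - x) = x - T^[t - n] y := by abel
    rwa [h2] at h1
  have hmemW : T^[t - n] y ∈ W := by
    have : x - (x - T^[t - n] y) ∈ W := hfinal
    simpa using this
  refine ⟨T^[(t - n) % p] y, ?_, ⟨(t - n) % p, Nat.mod_lt _ hp, rfl⟩⟩
  rw [← my_iter_mod T y p hy]
  exact hmemW

theorem stmt5 {𝕜 : Type*} [RCLike 𝕜] {X : Type*} [AddCommGroup X] [Module 𝕜 X]
    [UniformSpace X] [IsUniformAddGroup X] [ContinuousSMul 𝕜 X] [CompleteSpace X]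
    [TopologicalSpace.MetrizableSpace X] [Module ℝ X] [IsScalarTower ℝ 𝕜 X]
    [LocallyConvexSpace ℝ X] [Nontrivial X] (T : X →L[𝕜] X) :
    (∀ y : X, (∃ n : ℕ, 1 ≤ n ∧ (⇑T)^[n] y = y) →
      ∀ x : X, IsUniformlyRecurrentVec (⇑T) x →
        ¬ AccPt y (Filter.principal (Set.range fun n : ℕ => (⇑T)^[n] x))) ∧
    (∀ x : X, IsUniformlyRecurrentVec (⇑T) x → ¬ IsHypercyclicVec (⇑T) x) := by
  have hTc : Continuous T := T.continuous
  have part1 : ∀ y : X, (∃ n : ℕ, 1 ≤ n ∧ (⇑T)^[n] y = y) →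
      ∀ x : X, IsUniformlyRecurrentVec (⇑T) x →
        ¬ AccPt y (Filter.principal (Set.range fun n : ℕ => (⇑T)^[n] x)) := by
    rintro y ⟨p, hp, hpy⟩ x hx hacc
    have hycl : y ∈ closure (Set.range fun n : ℕ => (⇑T)^[n] x) := by
      rw [mem_closure_iff_clusterPt]
      exact Filter.NeBot.mono hacc (inf_le_inf_right _ nhdsWithin_le_nhds)
    have hxP := my_key hTc hp hpy hx hycl
    have hPfin : ((fun j => (⇑T)^[j] y) '' Set.Iio p).Finite :=
      (Set.finite_Iio p).image _
    rw [hPfin.isClosed.closure_eq] at hxP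
    obtain ⟨j₀, hj₀, hxj⟩ := hxP
    have hsub : (Set.range fun n : ℕ => (⇑T)^[n] x) ⊆ (fun j => (⇑T)^[j] y) '' Set.Iio p := by
      rintro _ ⟨n, rfl⟩
      have heq : (⇑T)^[n] x = (⇑T)^[(n + j₀) % p] y := by
        rw [← hxj, ← Function.iterate_add_apply, my_iter_mod _ y p hpy]
      exact ⟨(n + j₀) % p, Nat.mod_lt _ hp, heq.symm⟩
    exact my_not_accPt_of_finite (hPfin.subset hsub) y hacc
  refine ⟨part1, ?_⟩
  intro x hx hhc
  apply part1 0 ⟨1, le_refl 1, by simp⟩ x hx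
  rw [accPt_iff_nhds]
  intro U hU
  obtain ⟨v, hv⟩ := exists_ne (0 : X)
  have htend : Filter.Tendsto (fun n : ℕ => ((n : 𝕜)⁻¹) • v) atTop (𝓝 (0 : X)) := by
    have h1 : Filter.Tendsto (fun n : ℕ => ((n : 𝕜)⁻¹)) atTop (𝓝 (0 : 𝕜)) :=
      tendsto_inv_atTop_nhds_zero_nat (𝕜 := 𝕜)
    simpa using h1.smul_const v
  have hUint : interior U ∈ 𝓝 (0 : X) := interior_mem_nhds.mpr hU
  have hev : ∀ᶠ n : ℕ in atTop, ((n : 𝕜)⁻¹) • v ∈ interior U :=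
    htend.eventually_mem hUint
  obtain ⟨n, hnU, hn1⟩ := (hev.and (eventually_ge_atTop 1)).exists
  have hn0 : ((n : 𝕜)) ≠ 0 := Nat.cast_ne_zero.mpr (by omega)
  have hwne : ((n : 𝕜)⁻¹) • v ≠ 0 := by
    intro h
    apply hv
    have := congrArg (fun z => (n : 𝕜) • z) h
    simpa [smul_smul, hn0] using this
  have hWopen : IsOpen (interior U ∩ {(0 : X)}ᶜ) :=
    isOpen_interior.inter isOpen_compl_singleton
  have hWne : (interior U ∩ {(0 : X)}ᶜ).Nonempty := ⟨_, hnU, hwne⟩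
  obtain ⟨z, hzr, hzW⟩ := hhc.exists_mem_open hWopen hWne
  exact ⟨z, ⟨interior_subset hzW.1, hzr⟩, hzW.2⟩
end

section
/- The following five families of subsets of ℕ have the cut-shift-and-paste (CuSP) property: the family of syndetic subsets, the family of infinite subsets, the family of sets of positive lower density, the family of sets of positive upper density, and the family of sets of positive upper Banach density. That is, for each of these families F: whenever I₁,…,I_q ⊆ ℕ satisfy ℕ = I₁ ∪ … ∪ I_q and n₁,…,n_q ∈ ℕ (q ≥ 1), then A ∈ F implies ⋃_{j=1}^q (n_j + (A ∩ I_j)) ∈ F. -/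
open Filter Topology Set

namespace CuSPAux

lemma ncard_le_mul_image {q : ℕ} (f : ℕ → ℕ) (jf : ℕ → Fin q)
    (hinj : ∀ a b, f a = f b → jf a = jf b → a = b)
    (T : Set ℕ) (hT : T.Finite) : T.ncard ≤ q * (f '' T).ncard := by
  classical
  obtain ⟨t, rfl⟩ : ∃ t : Finset ℕ, T = ↑t := ⟨hT.toFinset, by simp⟩
  rw [← Finset.coe_image, Set.ncard_coe_finset, Set.ncard_coe_finset]
  refine Finset.card_le_mul_card_image _ q (fun b _ => ?_)
  have h : (t.filter (fun x => f x = b)).card ≤ (Finset.univ : Finset (Fin q)).card := by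
    apply Finset.card_le_card_of_injOn jf (fun _ _ => Finset.mem_univ _)
    intro a ha a' ha' h
    simp only [Finset.coe_filter, Set.mem_setOf_eq] at ha ha'
    exact hinj a a' (ha.2.trans ha'.2.symm) h
  simpa using h

lemma key {q : ℕ} (I : Fin q → Set ℕ) (hI : (⋃ j, I j) = Set.univ)
    (shift : Fin q → ℕ) (A : Set ℕ) :
    ∃ M : ℕ, ∃ f : ℕ → ℕ,
      (∀ a, a ≤ f a) ∧ (∀ a, f a ≤ a + M) ∧
      (∀ a ∈ A, f a ∈ ⋃ j, (fun k => shift j + k) '' (A ∩ I j)) ∧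
      (∀ T : Set ℕ, T.Finite → T.ncard ≤ q * (f '' T).ncard) := by
  have hcov : ∀ a : ℕ, ∃ j, a ∈ I j := by
    intro a
    have : a ∈ ⋃ j, I j := hI.symm ▸ Set.mem_univ a
    exact Set.mem_iUnion.mp this
  choose jf hjf using hcov
  refine ⟨Finset.univ.sup shift, fun a => shift (jf a) + a, fun a => Nat.le_add_left a _,
    ?_, ?_, ?_⟩
  · intro a
    show shift (jf a) + a ≤ a + _
    have := Finset.le_sup (f := shift) (Finset.mem_univ (jf a))
    omega
  · intro a ha
    exact Set.mem_iUnion.mpr ⟨jf a, ⟨a, ⟨ha, hjf a⟩, rfl⟩⟩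
  · intro T hT
    refine ncard_le_mul_image _ jf (fun a b hf hj => ?_) T hT
    rw [hj] at hf
    exact Nat.add_left_cancel hf

lemma count_interval {q M : ℕ} {A B : Set ℕ} {f : ℕ → ℕ}
    (hle : ∀ a, a ≤ f a) (hub : ∀ a, f a ≤ a + M)
    (hmem : ∀ a ∈ A, f a ∈ B)
    (hcard : ∀ T : Set ℕ, T.Finite → T.ncard ≤ q * (f '' T).ncard)
    (m N : ℕ) (hMN : M ≤ N) :
    (A ∩ Set.Icc m (m + N)).ncard ≤ q * (B ∩ Set.Icc m (m + N)).ncard + M := by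
  have hfin1 : (A ∩ Set.Icc m (m + (N - M))).Finite :=
    (Set.finite_Icc _ _).subset Set.inter_subset_right
  have hfinB : (B ∩ Set.Icc m (m + N)).Finite :=
    (Set.finite_Icc _ _).subset Set.inter_subset_right
  have h1 : A ∩ Set.Icc m (m + N) ⊆
      (A ∩ Set.Icc m (m + (N - M))) ∪ Set.Ioc (m + (N - M)) (m + N) := by
    rintro x ⟨hA, hm, hN⟩
    by_cases h : x ≤ m + (N - M)
    · exact Or.inl ⟨hA, hm, h⟩
    · exact Or.inr ⟨by omega, hN⟩
  have h2 : (Set.Ioc (m + (N - M)) (m + N)).ncard = M := by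
    rw [← Finset.coe_Ioc, Set.ncard_coe_finset, Nat.card_Ioc]
    omega
  have h3 : (A ∩ Set.Icc m (m + N)).ncard ≤ (A ∩ Set.Icc m (m + (N - M))).ncard + M := by
    calc (A ∩ Set.Icc m (m + N)).ncard
        ≤ ((A ∩ Set.Icc m (m + (N - M))) ∪ Set.Ioc (m + (N - M)) (m + N)).ncard :=
          Set.ncard_le_ncard h1 (hfin1.union ((Set.finite_Ioc _ _)))
      _ ≤ (A ∩ Set.Icc m (m + (N - M))).ncard + (Set.Ioc (m + (N - M)) (m + N)).ncard :=
          Set.ncard_union_le _ _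
      _ = _ := by rw [h2]
  have h4 : f '' (A ∩ Set.Icc m (m + (N - M))) ⊆ B ∩ Set.Icc m (m + N) := by
    rintro y ⟨a, ⟨haA, ham, haN⟩, rfl⟩
    refine ⟨hmem a haA, le_trans ham (hle a), ?_⟩
    have := hub a
    omega
  have h5 : (A ∩ Set.Icc m (m + (N - M))).ncard ≤ q * (B ∩ Set.Icc m (m + N)).ncard :=
    le_trans (hcard _ hfin1)
      (Nat.mul_le_mul_left q (Set.ncard_le_ncard h4 hfinB))
  omega

lemma ratio_bound {q aC bC M : ℕ} {d : ℝ} {N : ℕ} (hq : 0 < q)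
    (h1 : aC ≤ q * bC + M) (h2 : d / 2 < (aC : ℝ) / (N + 1)) (h3 : (M : ℝ) ≤ d / 4 * (N + 1)) :
    d / (4 * q) ≤ (bC : ℝ) / (N + 1) := by
  have hN : (0 : ℝ) < (N : ℝ) + 1 := by positivity
  have hq' : (0 : ℝ) < (q : ℝ) := by exact_mod_cast hq
  have h1' : (aC : ℝ) ≤ (q : ℝ) * bC + M := by exact_mod_cast h1
  rw [lt_div_iff₀ hN] at h2
  rw [div_le_div_iff₀ (by positivity) hN]
  nlinarith [h1', h2, h3]

lemma ratio_le_one (S : Set ℕ) (m N : ℕ) :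
    ((S ∩ Set.Icc m (m + N)).ncard : ℝ) / (N + 1) ≤ 1 := by
  rw [div_le_one (by positivity)]
  have hc : (Set.Icc m (m + N)).ncard = N + 1 := by
    rw [← Finset.coe_Icc, Set.ncard_coe_finset, Nat.card_Icc]; omega
  have h : (S ∩ Set.Icc m (m + N)).ncard ≤ N + 1 :=
    le_trans (Set.ncard_le_ncard Set.inter_subset_right (Set.finite_Icc m (m + N))) hc.le
  exact_mod_cast h

lemma Iic_eq (N : ℕ) : Set.Iic N = Set.Icc 0 (0 + N) := by
  ext x; simp


lemma ratio_le_one' (S : Set ℕ) (N : ℕ) :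
    ((S ∩ Set.Iic N).ncard : ℝ) / (N + 1) ≤ 1 := by
  rw [Iic_eq]; exact ratio_le_one S 0 N

end CuSPAux

theorem stmt10 :
    CuSP Syndetic ∧
    CuSP Set.Infinite ∧
    CuSP (fun A => 0 < lowerDensity A) ∧
    CuSP (fun A => 0 < upperDensity A) ∧
    CuSP (fun A => 0 < upperBanachDensity A) := by
  refine ⟨?_, ?_, ?_, ?_, ?_⟩
  · -- Syndetic
    intro q hq I hI shift A hA
    obtain ⟨M, f, hle, hub, hmem, -⟩ := CuSPAux.key I hI shift A
    obtain ⟨m, hm⟩ := hA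
    refine ⟨m + M, fun n => ?_⟩
    obtain ⟨k, hk, h1, h2⟩ := hm n
    refine ⟨f k, hmem k hk, le_trans h1 (hle k), ?_⟩
    have := hub k; omega
  · -- Infinite
    intro q hq I hI shift A hA
    obtain ⟨M, f, hle, hub, hmem, -⟩ := CuSPAux.key I hI shift A
    apply Set.infinite_of_not_bddAbove
    rintro ⟨b, hb⟩
    obtain ⟨a, haA, hab⟩ := hA.exists_gt b
    have h1 : f a ≤ b := hb (hmem a haA)
    have := hle a; omega
  · -- lower density
    intro q hq I hI shift A hA
    have hA' : 0 < lowerDensity A := hA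
    obtain ⟨M, f, hle, hub, hmem, hcard⟩ := CuSPAux.key I hI shift A
    show 0 < lowerDensity (⋃ j, (fun k => shift j + k) '' (A ∩ I j))
    set B := ⋃ j, (fun k => shift j + k) '' (A ∩ I j) with hBdef
    have hcnt : ∀ N, M ≤ N → (A ∩ Set.Iic N).ncard ≤ q * (B ∩ Set.Iic N).ncard + M := by
      intro N hN
      rw [CuSPAux.Iic_eq N]
      exact CuSPAux.count_interval hle hub hmem hcard 0 N hN
    have hA2 : lowerDensity A / 2 <
        Filter.atTop.liminf (fun N : ℕ => ((A ∩ Set.Iic N).ncard : ℝ) / (N + 1)) := by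
      have h := half_lt_self hA'
      unfold lowerDensity at h
      exact h
    have hev : ∀ᶠ N in atTop,
        lowerDensity A / 2 < ((A ∩ Set.Iic N).ncard : ℝ) / (N + 1) :=
      eventually_lt_of_lt_liminf hA2
        (isBoundedUnder_of ⟨0, fun N => by positivity⟩)
    have htend : Tendsto (fun N : ℕ => lowerDensity A / 4 * ((N : ℝ) + 1)) atTop atTop :=
      (tendsto_atTop_add_const_right atTop 1 (tendsto_natCast_atTop_atTop (R := ℝ))).const_mul_atTop
        (div_pos hA' (by norm_num))
    have hge : ∀ᶠ N in atTop,
        lowerDensity A / (4 * q) ≤ ((B ∩ Set.Iic N).ncard : ℝ) / (N + 1) := by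
      filter_upwards [hev, htend.eventually_ge_atTop (M : ℝ), eventually_ge_atTop M]
        with N h1 h2 h3
      exact CuSPAux.ratio_bound hq (hcnt N h3) h1 h2
    have hfinal : lowerDensity A / (4 * q) ≤ lowerDensity B := by
      have h := le_liminf_of_le
        (isCoboundedUnder_ge_of_le atTop (x := 1) (fun N => CuSPAux.ratio_le_one' B N)) hge
      unfold lowerDensity
      exact h
    have hq' : (0 : ℝ) < q := by exact_mod_cast hq
    have hpos : 0 < lowerDensity A / (4 * q) := div_pos hA' (by linarith)
    linarith
  · -- upper density
    intro q hq I hI shift A hA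
    have hA' : 0 < upperDensity A := hA
    obtain ⟨M, f, hle, hub, hmem, hcard⟩ := CuSPAux.key I hI shift A
    show 0 < upperDensity (⋃ j, (fun k => shift j + k) '' (A ∩ I j))
    set B := ⋃ j, (fun k => shift j + k) '' (A ∩ I j) with hBdef
    have hcnt : ∀ N, M ≤ N → (A ∩ Set.Iic N).ncard ≤ q * (B ∩ Set.Iic N).ncard + M := by
      intro N hN
      rw [CuSPAux.Iic_eq N]
      exact CuSPAux.count_interval hle hub hmem hcard 0 N hN
    have hA2 : upperDensity A / 2 <
        Filter.atTop.limsup (fun N : ℕ => ((A ∩ Set.Iic N).ncard : ℝ) / (N + 1)) := by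
      have h := half_lt_self hA'
      unfold upperDensity at h
      exact h
    have hfr : ∃ᶠ N in atTop,
        upperDensity A / 2 < ((A ∩ Set.Iic N).ncard : ℝ) / (N + 1) :=
      frequently_lt_of_lt_limsup
        (isCoboundedUnder_le_of_le atTop (x := 0) (fun N => by positivity))
        hA2
    have htend : Tendsto (fun N : ℕ => upperDensity A / 4 * ((N : ℝ) + 1)) atTop atTop :=
      (tendsto_atTop_add_const_right atTop 1 (tendsto_natCast_atTop_atTop (R := ℝ))).const_mul_atTop
        (div_pos hA' (by norm_num))
    have hge : ∃ᶠ N in atTop,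
        upperDensity A / (4 * q) ≤ ((B ∩ Set.Iic N).ncard : ℝ) / (N + 1) := by
      refine (hfr.and_eventually ((htend.eventually_ge_atTop (M : ℝ)).and
        (eventually_ge_atTop M))).mono ?_
      rintro N ⟨h1, h2, h3⟩
      exact CuSPAux.ratio_bound hq (hcnt N h3) h1 h2
    have hfinal : upperDensity A / (4 * q) ≤ upperDensity B := by
      have h := le_limsup_of_frequently_le hge
        (isBoundedUnder_of ⟨1, fun N => CuSPAux.ratio_le_one' B N⟩)
      unfold upperDensity
      exact h
    have hq' : (0 : ℝ) < q := by exact_mod_cast hq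
    have hpos : 0 < upperDensity A / (4 * q) := div_pos hA' (by linarith)
    linarith
  · -- upper Banach density
    intro q hq I hI shift A hA
    have hA' : 0 < upperBanachDensity A := hA
    obtain ⟨M, f, hle, hub, hmem, hcard⟩ := CuSPAux.key I hI shift A
    show 0 < upperBanachDensity (⋃ j, (fun k => shift j + k) '' (A ∩ I j))
    set B := ⋃ j, (fun k => shift j + k) '' (A ∩ I j) with hBdef
    have hBdd : ∀ (S : Set ℕ) (N : ℕ),
        BddAbove (Set.range fun m : ℕ => ((S ∩ Set.Icc m (m + N)).ncard : ℝ) / (N + 1)) :=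
      fun S N => ⟨1, by rintro x ⟨m, rfl⟩; exact CuSPAux.ratio_le_one S m N⟩
    have hfr : ∃ᶠ N in atTop, upperBanachDensity A / 2 <
        ⨆ m : ℕ, ((A ∩ Set.Icc m (m + N)).ncard : ℝ) / (N + 1) :=
      frequently_lt_of_lt_limsup
        (isCoboundedUnder_le_of_le atTop (x := 0)
          (fun N => Real.iSup_nonneg (fun m => by positivity)))
        (by
          have h := half_lt_self hA'
          unfold upperBanachDensity at h
          exact h)
    have htend : Tendsto (fun N : ℕ => upperBanachDensity A / 4 * ((N : ℝ) + 1)) atTop atTop :=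
      (tendsto_atTop_add_const_right atTop 1 (tendsto_natCast_atTop_atTop (R := ℝ))).const_mul_atTop
        (div_pos hA' (by norm_num))
    have hge : ∃ᶠ N in atTop, upperBanachDensity A / (4 * q) ≤
        ⨆ m : ℕ, ((B ∩ Set.Icc m (m + N)).ncard : ℝ) / (N + 1) := by
      refine (hfr.and_eventually ((htend.eventually_ge_atTop (M : ℝ)).and
        (eventually_ge_atTop M))).mono ?_
      rintro N ⟨h1, h2, h3⟩
      obtain ⟨m, hm⟩ := exists_lt_of_lt_ciSup h1
      have hcnt := CuSPAux.count_interval hle hub hmem hcard m N h3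
      exact le_trans (CuSPAux.ratio_bound hq hcnt hm h2) (le_ciSup (hBdd B N) m)
    have hfinal : upperBanachDensity A / (4 * q) ≤ upperBanachDensity B := by
      have h := le_limsup_of_frequently_le hge
        (isBoundedUnder_of ⟨1, fun N => ciSup_le (fun m => CuSPAux.ratio_le_one B m N)⟩)
      unfold upperBanachDensity
      exact h
    have hq' : (0 : ℝ) < q := by exact_mod_cast hq
    have hpos : 0 < upperBanachDensity A / (4 * q) := div_pos hA' (by linarith)
    linarith
end

section
/- Let X be a topological vector space, T : X → X a continuous linear operator, and p ≥ 1 an integer. Then T and T^p have the same uniformly recurrent vectors, the same frequently recurrent vectors, the same upper frequently recurrent vectors, and the same reiteratively recurrent vectors. In particular, if T is uniformly recurrent (frequently recurrent, upper frequently recurrent, reiteratively recurrent) then so is T^p. -/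
open Filter Topology Set

open scoped Classical

noncomputable def myCnt (A : Set ℕ) (m N : ℕ) : ℕ :=
  ((Finset.Icc m (m+N)).filter fun n => n ∈ A).card

open Classical in
lemma myCnt_eq_ncard (A : Set ℕ) (m N : ℕ) :
    (A ∩ Set.Icc m (m+N)).ncard = myCnt A m N := by
  rw [myCnt, ← Set.ncard_coe_finset]
  congr 1
  ext n
  simp [and_comm]

lemma myCnt_Iic (A : Set ℕ) (N : ℕ) :
    (A ∩ Set.Iic N).ncard = myCnt A 0 N := by
  rw [← myCnt_eq_ncard]
  congr 1
  ext n
  simp [Nat.zero_le]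

open Classical in
lemma myCnt_le (A : Set ℕ) (m N : ℕ) : myCnt A m N ≤ N + 1 := by
  calc ((Finset.Icc m (m+N)).filter fun n => n ∈ A).card
      ≤ (Finset.Icc m (m+N)).card := Finset.card_filter_le _ _
    _ = N + 1 := by rw [Nat.card_Icc]; omega

open Classical in
lemma myCnt_mono (A : Set ℕ) (m : ℕ) {N N' : ℕ} (h : N ≤ N') : myCnt A m N ≤ myCnt A m N' := by
  apply Finset.card_le_card
  apply Finset.filter_subset_filter
  apply Finset.Icc_subset_Icc le_rfl (by omega)

lemma nat_mul_div_le (b x : ℕ) : b * (x / b) ≤ x := by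
  rw [mul_comm]; exact Nat.div_mul_le_self x b

lemma nat_lt_mul_div_add (hb : 0 < b) (x : ℕ) : x < b * (x / b) + b := by
  have h1 := Nat.div_add_mod x b
  have h2 := Nat.mod_lt x hb
  omega

open Classical in
lemma myK1 {A B : Set ℕ} {f : ℕ → ℕ} {a b M : ℕ} (ha : 0 < a) (hb : 0 < b)
    (hfB : ∀ n ∈ A, f n ∈ B)
    (hf1 : ∀ n ∈ A, a * f n ≤ b * n + M)
    (hf2 : ∀ n ∈ A, b * n ≤ a * f n + M) (m N : ℕ) :
    myCnt A m N ≤ (2*M + 1) * myCnt B ((b*m - M)/a) ((b*N + 2*M)/a + 2) := by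
  classical
  set s : Finset ℕ := (Finset.Icc m (m+N)).filter (fun n => n ∈ A) with hs
  have hsA : ∀ n ∈ s, n ∈ A ∧ m ≤ n ∧ n ≤ m + N := by
    intro n hn
    simp only [hs, Finset.mem_filter, Finset.mem_Icc] at hn
    tauto
  set m' : ℕ := (b*m - M)/a with hm'
  set N' : ℕ := (b*N + 2*M)/a + 2 with hN'
  have himg : s.image f ⊆ (Finset.Icc m' (m'+N')).filter (fun k => k ∈ B) := by
    intro c hc
    simp only [Finset.mem_image] at hc
    obtain ⟨n, hn, rfl⟩ := hc
    obtain ⟨hnA, hnm, hnN⟩ := hsA n hn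
    simp only [Finset.mem_filter, Finset.mem_Icc]
    refine ⟨⟨?_, ?_⟩, hfB n hnA⟩
    · -- m' ≤ f n
      have h1 : a * m' ≤ b * m - M := nat_mul_div_le a _
      have h2 : b * m ≤ b * n := Nat.mul_le_mul_left b hnm
      have h3 : a * m' ≤ a * f n := by
        have := hf2 n hnA
        omega
      exact Nat.le_of_mul_le_mul_left h3 ha
    · -- f n ≤ m' + N'
      have h1 : a * f n ≤ b * n + M := hf1 n hnA
      have h2 : b * n ≤ b * m + b * N := by
        have := Nat.mul_le_mul_left b hnN
        rw [Nat.mul_add] at this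
        exact this
      have h3 : b * m - M < a * m' + a := nat_lt_mul_div_add ha _
      have h4 : b * N + 2*M < a * ((b*N + 2*M)/a) + a := nat_lt_mul_div_add ha _
      have h5 : a * N' = a * ((b*N + 2*M)/a) + 2*a := by rw [hN']; ring
      have h6 : a * f n ≤ a * (m' + N') := by
        rw [Nat.mul_add, h5]
        omega
      exact Nat.le_of_mul_le_mul_left h6 ha
  have hcard : (s.image f).card ≤ myCnt B m' N' := by
    rw [myCnt]
    exact Finset.card_le_card himg
  have hfib : s.card ≤ (2*M+1) * (s.image f).card := by
    apply Finset.card_le_mul_card_image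
    intro c hc
    set t : Finset ℕ := s.filter (fun x => f x = c) with ht
    by_cases htne : t.Nonempty
    · obtain ⟨n₀, hn₀t, hn₀⟩ := Finset.exists_min_image t id htne
      have hmem : ∀ x ∈ t, x ∈ A ∧ f x = c := by
        intro x hx
        simp only [ht, Finset.mem_filter] at hx
        exact ⟨(hsA x hx.1).1, hx.2⟩
      have hsub : t ⊆ Finset.Icc n₀ (n₀ + 2*M) := by
        intro x hx
        obtain ⟨hxA, hxc⟩ := hmem x hx
        obtain ⟨hn₀A, hn₀c⟩ := hmem n₀ hn₀t
        have hle : n₀ ≤ x := hn₀ x hx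
        simp only [Finset.mem_Icc]
        refine ⟨hle, ?_⟩
        -- b*x ≤ a*c + M, a*c ≤ b*n₀ + M  ⇒ b*x ≤ b*n₀ + 2M ⇒ x ≤ n₀ + 2M
        have h1 : b * x ≤ a * c + M := by have := hf2 x hxA; rw [hxc] at this; omega
        have h2 : a * c ≤ b * n₀ + M := by have := hf1 n₀ hn₀A; rw [hn₀c] at this; omega
        have h3 : b * x ≤ b * (n₀ + 2*M) := by
          have h4 : b * (n₀ + 2*M) = b*n₀ + b*(2*M) := by ring
          have h5 : 2*M ≤ b*(2*M) := Nat.le_mul_of_pos_left _ hb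
          omega
        exact Nat.le_of_mul_le_mul_left (by omega : b * x ≤ b * (n₀ + 2*M)) hb
      calc t.card ≤ (Finset.Icc n₀ (n₀ + 2*M)).card := Finset.card_le_card hsub
        _ = 2*M + 1 := by rw [Nat.card_Icc]; omega
    · rw [Finset.not_nonempty_iff_eq_empty] at htne
      have h0 : t = ∅ := htne
      simp [h0]
  calc s.card ≤ (2*M+1) * (s.image f).card := hfib
    _ ≤ (2*M+1) * myCnt B m' N' := Nat.mul_le_mul_left _ hcard

lemma mySyndeticTransfer {A B : Set ℕ} {f : ℕ → ℕ} {a b M : ℕ} (ha : 0 < a) (hb : 0 < b)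
    (hfB : ∀ n ∈ A, f n ∈ B)
    (hf1 : ∀ n ∈ A, a * f n ≤ b * n + M)
    (hf2 : ∀ n ∈ A, b * n ≤ a * f n + M)
    (hA : Syndetic A) : Syndetic B := by
  obtain ⟨g, hg⟩ := hA
  refine ⟨2*M + b*(g+1) + 1, fun n₀ => ?_⟩
  set n₁ : ℕ := (a*n₀ + M)/b + 1 with hn₁
  obtain ⟨k, hkA, hk1, hk2⟩ := hg n₁
  refine ⟨f k, hfB k hkA, ?_, ?_⟩
  · -- n₀ ≤ f k
    have h1 : a*n₀ + M < b * ((a*n₀+M)/b) + b := nat_lt_mul_div_add hb _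
    have h2 : b * n₁ = b * ((a*n₀+M)/b) + b := by rw [hn₁]; ring
    have h3 : b * n₁ ≤ b * k := Nat.mul_le_mul_left b hk1
    have h4 : b * k ≤ a * f k + M := hf2 k hkA
    have h5 : a * n₀ < a * f k := by omega
    exact le_of_lt (Nat.lt_of_mul_lt_mul_left h5)
  · -- f k < n₀ + (2M + b(g+1) + 1)
    have h1 : b * ((a*n₀+M)/b) ≤ a*n₀ + M := nat_mul_div_le b _
    have h2 : b * n₁ = b * ((a*n₀+M)/b) + b := by rw [hn₁]; ring
    have h3 : b * k ≤ b*n₁ + b*g := by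
      have : k ≤ n₁ + g := by omega
      have := Nat.mul_le_mul_left b this
      rw [Nat.mul_add] at this
      omega
    have h4 : a * f k ≤ b * k + M := hf1 k hkA
    have h5 : a * f k ≤ a*n₀ + 2*M + b*(g+1) := by
      have : b*(g+1) = b*g + b := by ring
      omega
    have h6 : a * f k < a * (n₀ + (2*M + b*(g+1) + 1)) := by
      have he : a * (n₀ + (2*M + b*(g+1) + 1)) = a*n₀ + a*(2*M + b*(g+1)) + a := by ring
      have hge : 2*M + b*(g+1) ≤ a*(2*M + b*(g+1)) := Nat.le_mul_of_pos_left _ ha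
      omega
    exact Nat.lt_of_mul_lt_mul_left h6

lemma myPosLiminf {u : ℕ → ℝ} (h0 : ∀ N, 0 ≤ u N) (h : 0 < Filter.atTop.liminf u) :
    ∃ δ : ℝ, 0 < δ ∧ ∀ᶠ N in Filter.atTop, δ ≤ u N := by
  refine ⟨Filter.atTop.liminf u / 2, half_pos h, ?_⟩
  have hb : Filter.atTop.IsBoundedUnder (· ≥ ·) u := Filter.isBoundedUnder_of ⟨0, fun N => h0 N⟩
  exact (Filter.eventually_lt_of_lt_liminf (half_lt_self h) hb).mono fun _ hx => hx.le

lemma myPosLimsup {u : ℕ → ℝ} (h0 : ∀ N, 0 ≤ u N) (h : 0 < Filter.atTop.limsup u) :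
    ∃ δ : ℝ, 0 < δ ∧ ∃ᶠ N in Filter.atTop, δ ≤ u N := by
  refine ⟨Filter.atTop.limsup u / 2, half_pos h, ?_⟩
  have hb : Filter.atTop.IsCoboundedUnder (· ≤ ·) u :=
    Filter.isCoboundedUnder_le_of_le Filter.atTop h0
  exact (Filter.frequently_lt_of_lt_limsup hb (half_lt_self h)).mono fun _ hx => hx.le

lemma myLiminfPos {u : ℕ → ℝ} {δ : ℝ} (hδ : 0 < δ) (h1 : ∀ N, u N ≤ 1)
    (h : ∀ᶠ N in Filter.atTop, δ ≤ u N) : 0 < Filter.atTop.liminf u := by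
  have hcob : Filter.atTop.IsCoboundedUnder (· ≥ ·) u :=
    Filter.isCoboundedUnder_ge_of_le Filter.atTop h1
  exact lt_of_lt_of_le hδ (Filter.le_liminf_of_le hcob h)

lemma myLimsupPos {u : ℕ → ℝ} {δ : ℝ} (hδ : 0 < δ) (h1 : ∀ N, u N ≤ 1)
    (h : ∃ᶠ N in Filter.atTop, δ ≤ u N) : 0 < Filter.atTop.limsup u := by
  have hb : Filter.atTop.IsBoundedUnder (· ≤ ·) u := Filter.isBoundedUnder_of ⟨1, fun N => h1 N⟩
  exact lt_of_lt_of_le hδ (Filter.le_limsup_of_frequently_le h hb)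

lemma lowerDensity_eq (A : Set ℕ) :
    lowerDensity A = Filter.atTop.liminf fun N : ℕ => (myCnt A 0 N : ℝ) / (N + 1) := by
  unfold lowerDensity
  congr 1
  funext N
  rw [myCnt_Iic]

lemma myDensFrac_nonneg (A : Set ℕ) (m N : ℕ) : 0 ≤ (myCnt A m N : ℝ) / (N + 1) := by
  positivity

lemma myDensFrac_le_one (A : Set ℕ) (m N : ℕ) : (myCnt A m N : ℝ) / (N + 1) ≤ 1 := by
  rw [div_le_one (by positivity)]
  have := myCnt_le A m N
  exact_mod_cast by exact_mod_cast Nat.cast_le.mpr this |>.trans_eq (by push_cast; ring)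

lemma myDensFrac_le_one' (A : Set ℕ) (m N : ℕ) :
    ((A ∩ Set.Icc m (m+N)).ncard : ℝ) / (N + 1) ≤ 1 := by
  rw [myCnt_eq_ncard]
  exact myDensFrac_le_one A m N

lemma myLowerTransfer {A B : Set ℕ} {f : ℕ → ℕ} {a b M : ℕ} (ha : 0 < a) (hb : 0 < b)
    (hfB : ∀ n ∈ A, f n ∈ B)
    (hf1 : ∀ n ∈ A, a * f n ≤ b * n + M)
    (hf2 : ∀ n ∈ A, b * n ≤ a * f n + M)
    (hA : 0 < lowerDensity A) : 0 < lowerDensity B := by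
  rw [lowerDensity_eq] at hA ⊢
  obtain ⟨δ, hδ, hev⟩ := myPosLiminf (fun N => myDensFrac_nonneg A 0 N) hA
  rw [Filter.eventually_atTop] at hev
  obtain ⟨N₁, hN₁⟩ := hev
  set δ'' : ℝ := δ * a / (4*b*(2*M+1)) with hδ''
  apply myLiminfPos (δ := δ'') (by positivity) (fun N => myDensFrac_le_one B 0 N)
  rw [Filter.eventually_atTop]
  refine ⟨2*M + b*N₁ + 2 + 5*a + 4*M + 2, fun K hK => ?_⟩
  set N : ℕ := (a*(K-2) - 2*M)/b with hN
  -- N ≥ N₁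
  have haK : K - 2 ≤ a*(K-2) := Nat.le_mul_of_pos_left _ ha
  have hNN₁ : N₁ ≤ N := by
    rw [hN, Nat.le_div_iff_mul_le hb]
    have hc : N₁ * b = b * N₁ := mul_comm _ _
    omega
  -- N' ≤ K where N' = (b*N+2*M)/a + 2
  have hN' : (b*N + 2*M)/a + 2 ≤ K := by
    have h1 : b * N ≤ a*(K-2) - 2*M := nat_mul_div_le b _
    have h2 : b*N + 2*M ≤ a*(K-2) := by omega
    have h3 : (b*N + 2*M)/a ≤ (a*(K-2))/a := Nat.div_le_div_right h2
    rw [Nat.mul_div_cancel_left _ ha] at h3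
    omega
  -- ratio : a*(K+1) ≤ 2*b*(N+1)
  have hratio : a*(K+1) ≤ 2*b*(N+1) := by
    have h1 : a*(K-2) - 2*M < b*N + b := nat_lt_mul_div_add hb _
    have h2 : a*(K+1) = a*(K-2) + 3*a := by
      have : K - 2 + 3 = K + 1 := by omega
      calc a*(K+1) = a*(K-2+3) := by rw [this]
        _ = a*(K-2) + 3*a := by ring
    have h3 : 2*b*(N+1) = 2*(b*N) + 2*b := by ring
    have h4 : 5*a + 4*M + 2 ≤ K := by omega
    have h5 : 5*a + 4*M ≤ a*(K-2) := by
      calc 5*a + 4*M ≤ K - 2 := by omega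
        _ ≤ a*(K-2) := haK
    omega
  -- counting chain
  have hcount : myCnt A 0 N ≤ (2*M+1) * myCnt B 0 K := by
    have h1 := myK1 ha hb hfB hf1 hf2 0 N
    have h2 : (b*0 - M)/a = 0 := by simp [Nat.zero_sub]
    rw [h2] at h1
    calc myCnt A 0 N ≤ (2*M+1) * myCnt B 0 ((b*N + 2*M)/a + 2) := h1
      _ ≤ (2*M+1) * myCnt B 0 K := Nat.mul_le_mul_left _ (myCnt_mono B 0 (by omega))
  -- real inequalities
  have hdN : δ ≤ (myCnt A 0 N : ℝ) / (N + 1) := hN₁ N hNN₁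
  have r1 : δ * ((N:ℝ)+1) ≤ (myCnt A 0 N : ℝ) := by
    rw [le_div_iff₀ (by positivity)] at hdN
    linarith
  have c1 : ((a:ℝ)*((K:ℝ)+1)) ≤ 2*(b:ℝ)*((N:ℝ)+1) := by exact_mod_cast hratio
  have c2 : (myCnt A 0 N : ℝ) ≤ (2*(M:ℝ)+1) * (myCnt B 0 K : ℝ) := by exact_mod_cast hcount
  rw [hδ'', div_le_div_iff₀ (by positivity) (by positivity)]
  have hcB : (0:ℝ) ≤ (myCnt B 0 K : ℝ) := by positivity
  calc δ * (a:ℝ) * ((K:ℝ)+1) = δ * ((a:ℝ)*((K:ℝ)+1)) := by ring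
    _ ≤ δ * (2*(b:ℝ)*((N:ℝ)+1)) := mul_le_mul_of_nonneg_left c1 hδ.le
    _ = 2*(b:ℝ)*(δ*((N:ℝ)+1)) := by ring
    _ ≤ 2*(b:ℝ)*(myCnt A 0 N : ℝ) := mul_le_mul_of_nonneg_left r1 (by positivity)
    _ ≤ 2*(b:ℝ)*((2*(M:ℝ)+1) * (myCnt B 0 K : ℝ)) := mul_le_mul_of_nonneg_left c2 (by positivity)
    _ ≤ (myCnt B 0 K : ℝ) * (4*(b:ℝ)*(2*(M:ℝ)+1)) := by nlinarith [hcB]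

lemma upperDensity_eq (A : Set ℕ) :
    upperDensity A = Filter.atTop.limsup fun N : ℕ => (myCnt A 0 N : ℝ) / (N + 1) := by
  unfold upperDensity; congr 1; funext N; rw [myCnt_Iic]

lemma myUpperTransfer {A B : Set ℕ} {f : ℕ → ℕ} {a b M : ℕ} (ha : 0 < a) (hb : 0 < b)
    (hfB : ∀ n ∈ A, f n ∈ B)
    (hf1 : ∀ n ∈ A, a * f n ≤ b * n + M)
    (hf2 : ∀ n ∈ A, b * n ≤ a * f n + M)
    (hA : 0 < upperDensity A) : 0 < upperDensity B := by
  rw [upperDensity_eq] at hA ⊢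
  obtain ⟨δ, hδ, hfr⟩ := myPosLimsup (fun N => myDensFrac_nonneg A 0 N) hA
  set δ'' : ℝ := δ * a / (4*b*(2*M+1)) with hδ''
  apply myLimsupPos (δ := δ'') (by positivity) (fun N => myDensFrac_le_one B 0 N)
  rw [Filter.frequently_atTop] at hfr ⊢
  intro K₀
  obtain ⟨N, hNge, hdN⟩ := hfr (max (a*K₀) (2*M + 3*a))
  set K : ℕ := (b*N + 2*M)/a + 2 with hKdef
  have hNk : a*K₀ ≤ N := le_trans (le_max_left _ _) hNge
  have hN₂ : 2*M + 3*a ≤ N := le_trans (le_max_right _ _) hNge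
  refine ⟨K, ?_, ?_⟩
  · -- K₀ ≤ K
    have h1 : a*K₀ ≤ b*N + 2*M := by
      have : N ≤ b*N := Nat.le_mul_of_pos_left _ hb
      omega
    have h2 : K₀ ≤ (b*N + 2*M)/a := by
      rw [Nat.le_div_iff_mul_le ha]
      have : K₀ * a = a * K₀ := mul_comm _ _
      omega
    omega
  · -- δ'' ≤ d K
    have hratio : a*(K+1) ≤ 2*b*(N+1) := by
      have h1 : a * ((b*N + 2*M)/a) ≤ b*N + 2*M := nat_mul_div_le a _
      have h2 : a*(K+1) = a*((b*N + 2*M)/a) + 3*a := by rw [hKdef]; ring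
      have h3 : 2*b*(N+1) = 2*(b*N) + 2*b := by ring
      have h4 : N ≤ b*N := Nat.le_mul_of_pos_left _ hb
      omega
    have hcount : myCnt A 0 N ≤ (2*M+1) * myCnt B 0 K := by
      have h1 := myK1 ha hb hfB hf1 hf2 0 N
      have h2 : (b*0 - M)/a = 0 := by simp [Nat.zero_sub]
      rw [h2] at h1
      exact h1
    have r1 : δ * ((N:ℝ)+1) ≤ (myCnt A 0 N : ℝ) := by
      rw [le_div_iff₀ (by positivity)] at hdN
      linarith
    have c1 : ((a:ℝ)*((K:ℝ)+1)) ≤ 2*(b:ℝ)*((N:ℝ)+1) := by exact_mod_cast hratio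
    have c2 : (myCnt A 0 N : ℝ) ≤ (2*(M:ℝ)+1) * (myCnt B 0 K : ℝ) := by exact_mod_cast hcount
    rw [hδ'', div_le_div_iff₀ (by positivity) (by positivity)]
    have hcB : (0:ℝ) ≤ (myCnt B 0 K : ℝ) := by positivity
    calc δ * (a:ℝ) * ((K:ℝ)+1) = δ * ((a:ℝ)*((K:ℝ)+1)) := by ring
      _ ≤ δ * (2*(b:ℝ)*((N:ℝ)+1)) := mul_le_mul_of_nonneg_left c1 hδ.le
      _ = 2*(b:ℝ)*(δ*((N:ℝ)+1)) := by ring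
      _ ≤ 2*(b:ℝ)*(myCnt A 0 N : ℝ) := mul_le_mul_of_nonneg_left r1 (by positivity)
      _ ≤ 2*(b:ℝ)*((2*(M:ℝ)+1) * (myCnt B 0 K : ℝ)) := mul_le_mul_of_nonneg_left c2 (by positivity)
      _ ≤ (myCnt B 0 K : ℝ) * (4*(b:ℝ)*(2*(M:ℝ)+1)) := by nlinarith [hcB]

lemma myBanachFrac_bdd (A : Set ℕ) (N : ℕ) :
    BddAbove (Set.range fun m => (myCnt A m N : ℝ) / (N + 1)) := by
  refine ⟨1, ?_⟩
  rintro _ ⟨m, rfl⟩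
  exact myDensFrac_le_one A m N

lemma myBanachSup_nonneg (A : Set ℕ) (N : ℕ) :
    0 ≤ ⨆ m : ℕ, (myCnt A m N : ℝ) / (N + 1) :=
  le_trans (myDensFrac_nonneg A 0 N) (le_ciSup (myBanachFrac_bdd A N) 0)

lemma myBanachSup_le_one (A : Set ℕ) (N : ℕ) :
    (⨆ m : ℕ, (myCnt A m N : ℝ) / (N + 1)) ≤ 1 :=
  ciSup_le fun m => myDensFrac_le_one A m N

lemma upperBanachDensity_eq (A : Set ℕ) :
    upperBanachDensity A
      = Filter.atTop.limsup fun N : ℕ => ⨆ m : ℕ, (myCnt A m N : ℝ) / (N + 1) := by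
  unfold upperBanachDensity; congr 1; funext N; congr 1; funext m; rw [myCnt_eq_ncard]

lemma myBanachTransfer {A B : Set ℕ} {f : ℕ → ℕ} {a b M : ℕ} (ha : 0 < a) (hb : 0 < b)
    (hfB : ∀ n ∈ A, f n ∈ B)
    (hf1 : ∀ n ∈ A, a * f n ≤ b * n + M)
    (hf2 : ∀ n ∈ A, b * n ≤ a * f n + M)
    (hA : 0 < upperBanachDensity A) : 0 < upperBanachDensity B := by
  rw [upperBanachDensity_eq] at hA ⊢
  obtain ⟨δ, hδ, hfr⟩ := myPosLimsup (fun N => myBanachSup_nonneg A N) hA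
  set δ'' : ℝ := δ * a / (8*b*(2*M+1)) with hδ''
  apply myLimsupPos (δ := δ'') (by positivity) (fun N => myBanachSup_le_one B N)
  rw [Filter.frequently_atTop] at hfr ⊢
  intro K₀
  obtain ⟨N, hNge, hdN⟩ := hfr (max (a*K₀) (2*M + 3*a))
  set K : ℕ := (b*N + 2*M)/a + 2 with hKdef
  have hNk : a*K₀ ≤ N := le_trans (le_max_left _ _) hNge
  have hN₂ : 2*M + 3*a ≤ N := le_trans (le_max_right _ _) hNge
  -- extract a window
  have hlt : δ/2 < ⨆ m : ℕ, (myCnt A m N : ℝ) / (N + 1) := lt_of_lt_of_le (by linarith) hdN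
  obtain ⟨m, hm⟩ := exists_lt_of_lt_ciSup hlt
  refine ⟨K, ?_, ?_⟩
  · have h1 : a*K₀ ≤ b*N + 2*M := by
      have : N ≤ b*N := Nat.le_mul_of_pos_left _ hb
      omega
    have h2 : K₀ ≤ (b*N + 2*M)/a := by
      rw [Nat.le_div_iff_mul_le ha]
      have : K₀ * a = a * K₀ := mul_comm _ _
      omega
    omega
  · have hratio : a*(K+1) ≤ 2*b*(N+1) := by
      have h1 : a * ((b*N + 2*M)/a) ≤ b*N + 2*M := nat_mul_div_le a _
      have h2 : a*(K+1) = a*((b*N + 2*M)/a) + 3*a := by rw [hKdef]; ring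
      have h3 : 2*b*(N+1) = 2*(b*N) + 2*b := by ring
      have h4 : N ≤ b*N := Nat.le_mul_of_pos_left _ hb
      omega
    set m' : ℕ := (b*m - M)/a with hm'
    have hcount : myCnt A m N ≤ (2*M+1) * myCnt B m' K := myK1 ha hb hfB hf1 hf2 m N
    have r1 : δ/2 * ((N:ℝ)+1) ≤ (myCnt A m N : ℝ) := by
      rw [lt_div_iff₀ (by positivity)] at hm
      linarith
    have c1 : ((a:ℝ)*((K:ℝ)+1)) ≤ 2*(b:ℝ)*((N:ℝ)+1) := by exact_mod_cast hratio
    have c2 : (myCnt A m N : ℝ) ≤ (2*(M:ℝ)+1) * (myCnt B m' K : ℝ) := by exact_mod_cast hcount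
    have key : δ'' ≤ (myCnt B m' K : ℝ) / (K + 1) := by
      rw [hδ'', div_le_div_iff₀ (by positivity) (by positivity)]
      have hcB : (0:ℝ) ≤ (myCnt B m' K : ℝ) := by positivity
      calc δ * (a:ℝ) * ((K:ℝ)+1) = δ * ((a:ℝ)*((K:ℝ)+1)) := by ring
        _ ≤ δ * (2*(b:ℝ)*((N:ℝ)+1)) := mul_le_mul_of_nonneg_left c1 hδ.le
        _ = 4*(b:ℝ)*(δ/2*((N:ℝ)+1)) := by ring
        _ ≤ 4*(b:ℝ)*(myCnt A m N : ℝ) := mul_le_mul_of_nonneg_left r1 (by positivity)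
        _ ≤ 4*(b:ℝ)*((2*(M:ℝ)+1) * (myCnt B m' K : ℝ)) := mul_le_mul_of_nonneg_left c2 (by positivity)
        _ ≤ (myCnt B m' K : ℝ) * (8*(b:ℝ)*(2*(M:ℝ)+1)) := by nlinarith [hcB]
    exact le_trans key (le_ciSup (myBanachFrac_bdd B K) m')

lemma mySyndetic_infinite {A : Set ℕ} (h : Syndetic A) : A.Infinite := by
  obtain ⟨m, hm⟩ := h
  apply Set.infinite_of_not_bddAbove
  rintro ⟨bnd, hbnd⟩
  obtain ⟨k, hkA, hk1, _⟩ := hm (bnd + 1)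
  exact absurd (hbnd hkA) (by omega)

lemma myTendstoZero {A : Set ℕ} (c : ℕ → ℝ)
    (h0 : ∀ N, 0 ≤ c N) (hle : ∀ N, c N ≤ (A.ncard : ℝ) / (N+1)) :
    Filter.Tendsto c Filter.atTop (nhds 0) := by
  have h2 : Filter.Tendsto (fun N : ℕ => (A.ncard : ℝ) / (N+1)) Filter.atTop (nhds 0) := by
    apply Filter.Tendsto.div_atTop (tendsto_const_nhds)
    exact Filter.tendsto_atTop_add_const_right _ _ tendsto_natCast_atTop_atTop
  exact squeeze_zero h0 hle h2

lemma myIicBound {A : Set ℕ} (hfin : A.Finite) (N : ℕ) :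
    ((A ∩ Set.Iic N).ncard : ℝ) / (N + 1) ≤ (A.ncard : ℝ) / (N+1) := by
  have h1 : (A ∩ Set.Iic N).ncard ≤ A.ncard := Set.ncard_le_ncard Set.inter_subset_left hfin
  have h2 : ((A ∩ Set.Iic N).ncard : ℝ) ≤ (A.ncard : ℝ) := Nat.cast_le.mpr h1
  exact div_le_div_of_nonneg_right h2 (by positivity : (0:ℝ) ≤ N+1) |>.trans_eq rfl

lemma myLower_infinite {A : Set ℕ} (h : 0 < lowerDensity A) : A.Infinite := by
  by_contra h'
  rw [Set.not_infinite] at h'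
  have key : Filter.Tendsto (fun N : ℕ => ((A ∩ Set.Iic N).ncard : ℝ) / (N + 1))
      Filter.atTop (nhds 0) :=
    myTendstoZero _ (fun N => by positivity) (myIicBound h')
  rw [lowerDensity, key.liminf_eq] at h
  exact lt_irrefl _ h

lemma myUpper_infinite {A : Set ℕ} (h : 0 < upperDensity A) : A.Infinite := by
  by_contra h'
  rw [Set.not_infinite] at h'
  have key : Filter.Tendsto (fun N : ℕ => ((A ∩ Set.Iic N).ncard : ℝ) / (N + 1))
      Filter.atTop (nhds 0) :=
    myTendstoZero _ (fun N => by positivity) (myIicBound h')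
  rw [upperDensity, key.limsup_eq] at h
  exact lt_irrefl _ h

lemma myBanach_infinite {A : Set ℕ} (h : 0 < upperBanachDensity A) : A.Infinite := by
  by_contra h'
  rw [Set.not_infinite] at h'
  have key : Filter.Tendsto
      (fun N : ℕ => ⨆ m : ℕ, (((A ∩ Set.Icc m (m + N)).ncard : ℝ) / (N + 1)))
      Filter.atTop (nhds 0) := by
    apply myTendstoZero (A := A)
    · intro N
      refine le_trans ?_ (le_ciSup (⟨1, ?_⟩ : BddAbove _) 0)
      · positivity
      · rintro _ ⟨m, rfl⟩
        exact myDensFrac_le_one' A m N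
    · intro N
      apply ciSup_le
      intro m
      have h1 : (A ∩ Set.Icc m (m+N)).ncard ≤ A.ncard :=
        Set.ncard_le_ncard Set.inter_subset_left h'
      have h2 : ((A ∩ Set.Icc m (m+N)).ncard : ℝ) ≤ (A.ncard : ℝ) := Nat.cast_le.mpr h1
      exact div_le_div_of_nonneg_right h2 (by positivity : (0:ℝ) ≤ N+1) |>.trans_eq rfl
  rw [upperBanachDensity, key.limsup_eq] at h
  exact lt_irrefl _ h


-- ## iterate lemmas and the residue-set machinery
section Core
variable {𝕜 : Type*} [RCLike 𝕜] {X : Type*} [AddCommGroup X] [Module 𝕜 X]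
    [TopologicalSpace X] [IsTopologicalAddGroup X] [ContinuousSMul 𝕜 X] (T : X →L[𝕜] X)

omit [IsTopologicalAddGroup X] [ContinuousSMul 𝕜 X] in
lemma myIterAdd (n : ℕ) (u v : X) : (⇑T)^[n] (u+v) = (⇑T)^[n] u + (⇑T)^[n] v := by
  induction n with
  | zero => simp
  | succ k ih => simp [Function.iterate_succ_apply', ih, map_add]

omit [IsTopologicalAddGroup X] [ContinuousSMul 𝕜 X] in
lemma myIterZero (n : ℕ) : (⇑T)^[n] (0:X) = 0 := by
  induction n with
  | zero => simp
  | succ k ih => simp [Function.iterate_succ_apply', ih]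

omit [IsTopologicalAddGroup X] [ContinuousSMul 𝕜 X] in
lemma myIterCont (n : ℕ) : Continuous ((⇑T)^[n]) := T.continuous.iterate n

def myR (T : X →L[𝕜] X) (p : ℕ) (x : X) : Set (ZMod p) :=
  {j | ∀ U ∈ nhds x, ∃ n : ℕ, 0 < n ∧ (n : ZMod p) = j ∧ (⇑T)^[n] x ∈ U}

variable {p : ℕ} (x : X)

lemma myR_add {i j : ZMod p} (hi : i ∈ myR T p x) (hj : j ∈ myR T p x) :
    i + j ∈ myR T p x := by
  intro U hU
  have hadd : Filter.Tendsto (fun w : X => x + w) (nhds 0) (nhds x) := by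
    have h : Continuous fun w : X => x + w := continuous_const.add continuous_id
    simpa using h.tendsto (0 : X)
  set W₀ : Set X := (fun w : X => x + w) ⁻¹' U with hW₀
  have hW₀mem : W₀ ∈ nhds (0:X) := hadd hU
  obtain ⟨W₁, hW₁mem, hW₁⟩ := exists_nhds_zero_half hW₀mem
  have hxW₁ : (fun y : X => y - x) ⁻¹' W₁ ∈ nhds x := by
    have h : Filter.Tendsto (fun y : X => y - x) (nhds x) (nhds 0) := by
      have h : Continuous fun y : X => y - x := continuous_id.sub continuous_const
      simpa using h.tendsto x
    exact h hW₁mem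
  obtain ⟨n, hn0, hnmod, hnmem⟩ := hi _ hxW₁
  have hW₂mem : ((fun y : X => y - x) ⁻¹' (W₁ ∩ ((⇑T)^[n]) ⁻¹' W₁)) ∈ nhds x := by
    have hT : Filter.Tendsto ((⇑T)^[n]) (nhds (0:X)) (nhds 0) := by
      have := (myIterCont T n).tendsto (0:X)
      rwa [myIterZero] at this
    have h : Filter.Tendsto (fun y : X => y - x) (nhds x) (nhds 0) := by
      have h : Continuous fun y : X => y - x := continuous_id.sub continuous_const
      simpa using h.tendsto x
    exact h (Filter.inter_mem hW₁mem (hT hW₁mem))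
  obtain ⟨m, hm0, hmmod, hmmem⟩ := hj _ hW₂mem
  refine ⟨n + m, by omega, by push_cast [hnmod, hmmod]; ring, ?_⟩
  have hw : T^[m] x - x ∈ W₁ ∩ ((⇑T)^[n]) ⁻¹' W₁ := hmmem
  have hx' : (⇑T)^[m] x = x + ((⇑T)^[m] x - x) := by abel
  have calc1 : (⇑T)^[n+m] x = (⇑T)^[n] ((⇑T)^[m] x) := Function.iterate_add_apply _ n m x
  rw [calc1, hx', myIterAdd]
  have h1 : (⇑T)^[n] x - x ∈ W₁ := hnmem
  have h2 : (⇑T)^[n] ((⇑T)^[m] x - x) ∈ W₁ := hw.2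
  have hfin : ((⇑T)^[n] x - x) + (⇑T)^[n] ((⇑T)^[m] x - x) ∈ W₀ := hW₁ _ h1 _ h2
  have : x + (((⇑T)^[n] x - x) + (⇑T)^[n] ((⇑T)^[m] x - x)) ∈ U := hfin
  convert this using 1
  abel

lemma myR_nonempty (hp : 1 ≤ p) (hrec : ∀ U ∈ nhds x, (returnSet (⇑T) x U).Infinite) :
    (myR T p x).Nonempty := by
  haveI : NeZero p := ⟨by omega⟩
  by_contra hne
  rw [Set.not_nonempty_iff_eq_empty] at hne
  have hall : ∀ j : ZMod p, ∃ U ∈ nhds x,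
      ∀ n : ℕ, ¬(0 < n ∧ (n : ZMod p) = j ∧ (⇑T)^[n] x ∈ U) := by
    intro j
    have hj : j ∉ myR T p x := by rw [hne]; exact Set.notMem_empty j
    rw [myR, Set.mem_setOf_eq] at hj
    push_neg at hj
    obtain ⟨U, hU, h⟩ := hj
    exact ⟨U, hU, fun n hn => by obtain ⟨h1, h2, h3⟩ := hn; exact absurd h3 (h n h1 h2)⟩
  choose u hu hu2 using hall
  have hUmem : (⋂ j : ZMod p, u j) ∈ nhds x := Filter.iInter_mem.mpr hu
  have hinf := hrec _ hUmem
  obtain ⟨n, hnmem, hn⟩ := hinf.exists_gt 0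
  exact hu2 (n : ZMod p) n ⟨hn, rfl, Set.mem_iInter.mp hnmem _⟩

lemma myR_nsmul {j : ZMod p} (hj : j ∈ myR T p x) : ∀ k : ℕ, 1 ≤ k → (k • j) ∈ myR T p x := by
  intro k hk
  induction k with
  | zero => omega
  | succ m ih =>
    rcases Nat.eq_or_lt_of_le hk with h | h
    · simpa [← h] using hj
    · have hm : 1 ≤ m := by omega
      have := myR_add T x (ih hm) hj
      convert this using 1
      rw [succ_nsmul]

lemma myR_zero (hp : 1 ≤ p) (hrec : ∀ U ∈ nhds x, (returnSet (⇑T) x U).Infinite) :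
    (0 : ZMod p) ∈ myR T p x := by
  haveI : NeZero p := ⟨by omega⟩
  obtain ⟨j, hj⟩ := myR_nonempty T x hp hrec
  have := myR_nsmul T x hj p hp
  have heq : (p • j : ZMod p) = 0 := by
    rw [nsmul_eq_mul]; simp [ZMod.natCast_self]
  rwa [heq] at this

lemma myR_neg {j : ZMod p} (hp : 1 ≤ p)
    (hrec : ∀ U ∈ nhds x, (returnSet (⇑T) x U).Infinite)
    (hj : j ∈ myR T p x) : (-j) ∈ myR T p x := by
  haveI : NeZero p := ⟨by omega⟩
  rcases Nat.lt_or_ge p 2 with h2 | h2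
  · have hp1 : p = 1 := by omega
    subst hp1
    have : (-j) = j := by apply Subsingleton.elim
    rwa [this]
  · have := myR_nsmul T x hj (p-1) (by omega)
    have heq : ((p-1) • j : ZMod p) = -j := by
      rw [nsmul_eq_mul]
      push_cast [Nat.cast_sub (by omega : 1 ≤ p)]
      rw [ZMod.natCast_self]
      ring
    rwa [heq] at this

lemma myCore (hp : 1 ≤ p) (hrec : ∀ U ∈ nhds x, (returnSet (⇑T) x U).Infinite)
    (U : Set X) (hU : U ∈ nhds x) :
    ∃ V ∈ nhds x, ∃ M : ℕ, ∃ m : ℕ → ℕ, ∀ n ∈ returnSet (⇑T) x V,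
      m n ≤ M ∧ (n + m n) % p = 0 ∧ (n + m n) ∈ returnSet (⇑T) x U := by
  haveI : NeZero p := ⟨by omega⟩
  have hsubx : Filter.Tendsto (fun y : X => y - x) (nhds x) (nhds 0) := by
    have h : Continuous fun y : X => y - x := continuous_id.sub continuous_const
    simpa using h.tendsto x
  have haddx : Filter.Tendsto (fun w : X => x + w) (nhds 0) (nhds x) := by
    have h : Continuous fun w : X => x + w := continuous_const.add continuous_id
    simpa using h.tendsto (0 : X)
  set W₀ : Set X := (fun w : X => x + w) ⁻¹' U with hW₀
  have hW₀mem : W₀ ∈ nhds (0:X) := haddx hU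
  obtain ⟨W₁, hW₁mem, hW₁half⟩ := exists_nhds_zero_half hW₀mem
  have hxW₁ : (fun y : X => y - x) ⁻¹' W₁ ∈ nhds x := hsubx hW₁mem
  set R := myR T p x with hR
  have hm : ∀ j : ZMod p, ∃ n : ℕ, j ∈ R →
      (0 < n ∧ (n : ZMod p) = -j ∧ (⇑T)^[n] x - x ∈ W₁) := by
    intro j
    by_cases hj : j ∈ R
    · obtain ⟨n, h1, h2, h3⟩ := (myR_neg T x hp hrec hj) _ hxW₁
      exact ⟨n, fun _ => ⟨h1, h2, h3⟩⟩
    · exact ⟨0, fun h => absurd h hj⟩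
  choose mf hmf using hm
  have hv : ∀ j : ZMod p, ∃ U' : Set X, U' ∈ nhds x ∧
      (j ∉ R → ∀ n : ℕ, ¬(0 < n ∧ (n : ZMod p) = j ∧ (⇑T)^[n] x ∈ U')) := by
    intro j
    by_cases hj : j ∈ R
    · exact ⟨Set.univ, Filter.univ_mem, fun h => absurd hj h⟩
    · have hj' := hj
      rw [hR, myR, Set.mem_setOf_eq] at hj'
      push_neg at hj'
      obtain ⟨U', hU', h⟩ := hj'
      exact ⟨U', hU', fun _ n hn => absurd hn.2.2 (h n hn.1 hn.2.1)⟩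
  choose uV huV huV2 using hv
  set V₀ : Set X := ⋂ j : ZMod p, uV j with hV₀
  have hV₀mem : V₀ ∈ nhds x := Filter.iInter_mem.mpr huV
  have hW₂mem : (W₁ ∩ ⋂ j : ZMod p, ((⇑T)^[mf j]) ⁻¹' W₁) ∈ nhds (0:X) := by
    apply Filter.inter_mem hW₁mem
    apply Filter.iInter_mem.mpr
    intro j
    have hT : Filter.Tendsto ((⇑T)^[mf j]) (nhds (0:X)) (nhds 0) := by
      have h := (myIterCont T (mf j)).tendsto (0:X)
      rwa [myIterZero] at h
    exact hT hW₁mem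
  set W₂ : Set X := W₁ ∩ ⋂ j : ZMod p, ((⇑T)^[mf j]) ⁻¹' W₁ with hW₂
  refine ⟨((fun y : X => y - x) ⁻¹' W₂) ∩ V₀, Filter.inter_mem (hsubx hW₂mem) hV₀mem,
    ∑ j : ZMod p, mf j, fun n => mf ((n : ZMod p)), ?_⟩
  intro n hn
  have hnW₂ : (⇑T)^[n] x - x ∈ W₂ := hn.1
  have hnV₀ : (⇑T)^[n] x ∈ V₀ := hn.2
  set j : ZMod p := ((n : ℕ) : ZMod p) with hj
  have hjR : j ∈ R := by
    rcases Nat.eq_zero_or_pos n with h0 | hpos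
    · rw [hj, h0]
      push_cast
      exact myR_zero T x hp hrec
    · by_contra hjR
      refine huV2 j hjR n ⟨hpos, rfl, ?_⟩
      exact Set.mem_iInter.mp hnV₀ j
  obtain ⟨hmf0, hmfcast, hmfmem⟩ := hmf j hjR
  refine ⟨?_, ?_, ?_⟩
  · exact Finset.single_le_sum (f := fun j : ZMod p => mf j)
      (fun _ _ => Nat.zero_le _) (Finset.mem_univ j)
  · have hcast : ((n + mf j : ℕ) : ZMod p) = 0 := by
      push_cast [hmfcast]
      rw [← hj]
      ring
    have hdvd : p ∣ (n + mf j) := by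
      rwa [ZMod.natCast_eq_zero_iff] at hcast
    show (n + mf j) % p = 0
    omega
  · show (⇑T)^[n + mf j] x ∈ U
    have hcomm : n + mf j = mf j + n := by omega
    rw [hcomm, Function.iterate_add_apply]
    have hxw : (⇑T)^[n] x = x + ((⇑T)^[n] x - x) := by abel
    rw [hxw, myIterAdd]
    have h1 : (⇑T)^[mf j] x - x ∈ W₁ := hmfmem
    have h2 : (⇑T)^[mf j] ((⇑T)^[n] x - x) ∈ W₁ := by
      have := hnW₂.2
      exact Set.mem_iInter.mp this j
    have hfin : ((⇑T)^[mf j] x - x) + (⇑T)^[mf j] ((⇑T)^[n] x - x) ∈ W₀ :=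
      hW₁half _ h1 _ h2
    have : x + (((⇑T)^[mf j] x - x) + (⇑T)^[mf j] ((⇑T)^[n] x - x)) ∈ U := hfin
    convert this using 1
    abel

-- ## glue between return sets of T and T^p
lemma myReturn_pow (S : X → X) (y : X) (U : Set X) (q n : ℕ) :
    n ∈ returnSet (S^[q]) y U ↔ q * n ∈ returnSet S y U := by
  unfold returnSet
  simp only [Set.mem_setOf_eq, Function.iterate_mul]

lemma myEasyData (U : Set X) :
    (∀ k ∈ returnSet ((⇑T)^[p]) x U, p * k ∈ returnSet (⇑T) x U) ∧
    (∀ k ∈ returnSet ((⇑T)^[p]) x U, 1 * (p * k) ≤ p * k + 0) ∧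
    (∀ k ∈ returnSet ((⇑T)^[p]) x U, p * k ≤ 1 * (p * k) + 0) := by
  refine ⟨fun k hk => (myReturn_pow (⇑T) x U p k).mp hk, fun k _ => by omega, fun k _ => by omega⟩

lemma myHardData (hp : 1 ≤ p) {V U : Set X} {M : ℕ} {m : ℕ → ℕ}
    (hcore : ∀ n ∈ returnSet (⇑T) x V,
      m n ≤ M ∧ (n + m n) % p = 0 ∧ (n + m n) ∈ returnSet (⇑T) x U) :
    (∀ n ∈ returnSet (⇑T) x V, (n + m n)/p ∈ returnSet ((⇑T)^[p]) x U) ∧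
    (∀ n ∈ returnSet (⇑T) x V, p * ((n + m n)/p) ≤ 1 * n + M) ∧
    (∀ n ∈ returnSet (⇑T) x V, 1 * n ≤ p * ((n + m n)/p) + M) := by
  have key : ∀ n ∈ returnSet (⇑T) x V, p * ((n + m n)/p) = n + m n := by
    intro n hn
    exact Nat.mul_div_cancel' (Nat.dvd_of_mod_eq_zero (hcore n hn).2.1)
  refine ⟨?_, ?_, ?_⟩
  · intro n hn
    rw [myReturn_pow, key n hn]
    exact (hcore n hn).2.2
  · intro n hn
    rw [key n hn]
    have := (hcore n hn).1
    omega
  · intro n hn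
    rw [key n hn]
    omega

end Core

-- ## the eight implications
section Main
variable {𝕜 : Type*} [RCLike 𝕜] {X : Type*} [AddCommGroup X] [Module 𝕜 X]
    [TopologicalSpace X] [IsTopologicalAddGroup X] [ContinuousSMul 𝕜 X] (T : X →L[𝕜] X)
    {p : ℕ} (x : X)

lemma myEasyUR (hp : 1 ≤ p) (h : IsUniformlyRecurrentVec ((⇑T)^[p]) x) :
    IsUniformlyRecurrentVec (⇑T) x := by
  intro U hU
  obtain ⟨hfB, hf1, hf2⟩ := myEasyData T x (p := p) U
  exact mySyndeticTransfer one_pos (by omega) hfB hf1 hf2 (h U hU)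

lemma myEasyFR (hp : 1 ≤ p) (h : IsFrequentlyRecurrentVec ((⇑T)^[p]) x) :
    IsFrequentlyRecurrentVec (⇑T) x := by
  intro U hU
  obtain ⟨hfB, hf1, hf2⟩ := myEasyData T x (p := p) U
  exact myLowerTransfer one_pos (by omega) hfB hf1 hf2 (h U hU)

lemma myEasyUFR (hp : 1 ≤ p) (h : IsUpperFrequentlyRecurrentVec ((⇑T)^[p]) x) :
    IsUpperFrequentlyRecurrentVec (⇑T) x := by
  intro U hU
  obtain ⟨hfB, hf1, hf2⟩ := myEasyData T x (p := p) U
  exact myUpperTransfer one_pos (by omega) hfB hf1 hf2 (h U hU)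

lemma myEasyRR (hp : 1 ≤ p) (h : IsReiterativelyRecurrentVec ((⇑T)^[p]) x) :
    IsReiterativelyRecurrentVec (⇑T) x := by
  intro U hU
  obtain ⟨hfB, hf1, hf2⟩ := myEasyData T x (p := p) U
  exact myBanachTransfer one_pos (by omega) hfB hf1 hf2 (h U hU)

lemma myHardUR (hp : 1 ≤ p) (h : IsUniformlyRecurrentVec (⇑T) x) :
    IsUniformlyRecurrentVec ((⇑T)^[p]) x := by
  intro U hU
  have hrec : ∀ W ∈ nhds x, (returnSet (⇑T) x W).Infinite :=
    fun W hW => mySyndetic_infinite (h W hW)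
  obtain ⟨V, hV, M, m, hcore⟩ := myCore T x hp hrec U hU
  obtain ⟨hfB, hf1, hf2⟩ := myHardData T x hp hcore
  exact mySyndeticTransfer (by omega) one_pos hfB hf1 hf2 (h V hV)

lemma myHardFR (hp : 1 ≤ p) (h : IsFrequentlyRecurrentVec (⇑T) x) :
    IsFrequentlyRecurrentVec ((⇑T)^[p]) x := by
  intro U hU
  have hrec : ∀ W ∈ nhds x, (returnSet (⇑T) x W).Infinite :=
    fun W hW => myLower_infinite (h W hW)
  obtain ⟨V, hV, M, m, hcore⟩ := myCore T x hp hrec U hU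
  obtain ⟨hfB, hf1, hf2⟩ := myHardData T x hp hcore
  exact myLowerTransfer (by omega) one_pos hfB hf1 hf2 (h V hV)

lemma myHardUFR (hp : 1 ≤ p) (h : IsUpperFrequentlyRecurrentVec (⇑T) x) :
    IsUpperFrequentlyRecurrentVec ((⇑T)^[p]) x := by
  intro U hU
  have hrec : ∀ W ∈ nhds x, (returnSet (⇑T) x W).Infinite :=
    fun W hW => myUpper_infinite (h W hW)
  obtain ⟨V, hV, M, m, hcore⟩ := myCore T x hp hrec U hU
  obtain ⟨hfB, hf1, hf2⟩ := myHardData T x hp hcore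
  exact myUpperTransfer (by omega) one_pos hfB hf1 hf2 (h V hV)

lemma myHardRR (hp : 1 ≤ p) (h : IsReiterativelyRecurrentVec (⇑T) x) :
    IsReiterativelyRecurrentVec ((⇑T)^[p]) x := by
  intro U hU
  have hrec : ∀ W ∈ nhds x, (returnSet (⇑T) x W).Infinite :=
    fun W hW => myBanach_infinite (h W hW)
  obtain ⟨V, hV, M, m, hcore⟩ := myCore T x hp hrec U hU
  obtain ⟨hfB, hf1, hf2⟩ := myHardData T x hp hcore
  exact myBanachTransfer (by omega) one_pos hfB hf1 hf2 (h V hV)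

end Main

theorem stmt11 {𝕜 : Type*} [RCLike 𝕜] {X : Type*} [AddCommGroup X] [Module 𝕜 X]
    [TopologicalSpace X] [IsTopologicalAddGroup X] [ContinuousSMul 𝕜 X] (T : X →L[𝕜] X) (p : ℕ) (hp : 1 ≤ p) :
    (∀ x : X, IsUniformlyRecurrentVec ((⇑T)^[p]) x ↔ IsUniformlyRecurrentVec (⇑T) x) ∧
    (∀ x : X, IsFrequentlyRecurrentVec ((⇑T)^[p]) x ↔ IsFrequentlyRecurrentVec (⇑T) x) ∧
    (∀ x : X, IsUpperFrequentlyRecurrentVec ((⇑T)^[p]) x ↔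
      IsUpperFrequentlyRecurrentVec (⇑T) x) ∧
    (∀ x : X, IsReiterativelyRecurrentVec ((⇑T)^[p]) x ↔
      IsReiterativelyRecurrentVec (⇑T) x) ∧
    (Dense {x : X | IsUniformlyRecurrentVec (⇑T) x} →
      Dense {x : X | IsUniformlyRecurrentVec ((⇑T)^[p]) x}) ∧
    (Dense {x : X | IsFrequentlyRecurrentVec (⇑T) x} →
      Dense {x : X | IsFrequentlyRecurrentVec ((⇑T)^[p]) x}) ∧
    (Dense {x : X | IsUpperFrequentlyRecurrentVec (⇑T) x} →
      Dense {x : X | IsUpperFrequentlyRecurrentVec ((⇑T)^[p]) x}) ∧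
    (Dense {x : X | IsReiterativelyRecurrentVec (⇑T) x} →
      Dense {x : X | IsReiterativelyRecurrentVec ((⇑T)^[p]) x}) := by
  refine ⟨fun x => ⟨myEasyUR T x hp, myHardUR T x hp⟩,
    fun x => ⟨myEasyFR T x hp, myHardFR T x hp⟩,
    fun x => ⟨myEasyUFR T x hp, myHardUFR T x hp⟩,
    fun x => ⟨myEasyRR T x hp, myHardRR T x hp⟩, ?_, ?_, ?_, ?_⟩
  · exact fun hd => hd.mono fun x hx => myHardUR T x hp hx
  · exact fun hd => hd.mono fun x hx => myHardFR T x hp hx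
  · exact fun hd => hd.mono fun x hx => myHardUFR T x hp hx
  · exact fun hd => hd.mono fun x hx => myHardRR T x hp hx
end
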